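/- arXiv:2105.13941 — 11 statements merged into one kernel-verified Lean document; each statement's English description precedes it below -/
import Mathlib

section
/- For every deterministic affine transition system T on a finite-dimensional ℚ-vector space V there exists a ℚ-DATS-reflection of T: there exist a finite-dimensional ℚ-vector space W, a ℚ-DATS U on W, and a linear simulation s : T → U such that for every ℚ-DATS Z on a finite-dimensional ℚ-vector space and every linear simulation t : T → Z, there is a unique linear simulation t̄ : U → Z with t̄ ∘ s = t. -/
open Module

section Defs

variable {V W : Type} [AddCommGroup V] [Module ℚ V] [AddCommGroup W] [Module ℚ W]

/-- A transition system is *deterministic* if each state has at most one successor. -/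
def Deterministic (R : Set (V × V)) : Prop :=
  ∀ x y₁ y₂ : V, (x, y₁) ∈ R → (x, y₂) ∈ R → y₁ = y₂

/-- A transition system is *linear* if its relation is (the carrier of) a ℚ-linear
subspace of `V × V`. -/
def IsLinearRel (R : Set (V × V)) : Prop :=
  ∃ p : Submodule ℚ (V × V), (p : Set (V × V)) = R

/-- A transition system is *affine* if its relation is an affine subspace of `V × V`. -/
def IsAffineRel (R : Set (V × V)) : Prop :=
  ∃ A : AffineSubspace ℚ (V × V), (A : Set (V × V)) = R

/-- A ℚ-linear map `s` is a *linear simulation* from `(V, R)` to `(W, S)`. -/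
def Sim (R : Set (V × V)) (S : Set (W × W)) (s : V →ₗ[ℚ] W) : Prop :=
  ∀ x x' : V, (x, x') ∈ R → (s x, s x') ∈ S

/-- `dom^ω(T)`: the set of states from which an infinite trajectory exists. -/
def OmegaDom (R : Set (V × V)) : Set V :=
  {x | ∃ u : ℕ → V, u 0 = x ∧ ∀ k : ℕ, (u k, u (k + 1)) ∈ R}

/-- `dom(T^k)`: the set of states from which a trajectory of length `k` exists. -/
def DomK (R : Set (V × V)) (k : ℕ) : Set V :=
  {x | ∃ u : ℕ → V, u 0 = x ∧ ∀ i : ℕ, i < k → (u i, u (i + 1)) ∈ R}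

/-- A (deterministic linear) transition system has *rational spectrum* if the induced
linear map `T|_ω` on its ω-domain has characteristic polynomial splitting over ℚ. -/
def HasRationalSpectrum [FiniteDimensional ℚ V] (R : Set (V × V)) : Prop :=
  ∃ (p : Submodule ℚ V) (f : Module.End ℚ p),
    (p : Set V) = OmegaDom R ∧ (∀ x : p, ((x : V), (f x : V)) ∈ R) ∧
    (LinearMap.charpoly f).Splits

/-- The homogenization of an affine relation `R` with respect to a chosen
transition `(x₀, x₀')`. -/
def Homog (R : Set (V × V)) (x₀ x₀' : V) : Set ((V × ℚ) × (V × ℚ)) :=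
  {p | p.1.2 = p.2.2 ∧ (p.1.1 + (1 - p.1.2) • x₀, p.2.1 + (1 - p.1.2) • x₀') ∈ R}

/-- A deterministic affine transition system is a ℚ-DATS if its relation is empty or
its homogenization is a deterministic linear transition system with rational spectrum. -/
def IsQDATS [FiniteDimensional ℚ V] (R : Set (V × V)) : Prop :=
  IsAffineRel R ∧ Deterministic R ∧
    (R = ∅ ∨ ∃ t ∈ R, IsLinearRel (Homog R t.1 t.2) ∧ Deterministic (Homog R t.1 t.2) ∧
      HasRationalSpectrum (Homog R t.1 t.2))

/-- The map `s : V → Λ*` sending `x` to the evaluation functional `f ↦ f x`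
(the simulation component of `α_Λ`). -/
def evalIn (Λ : Submodule ℚ (Module.Dual ℚ V)) : V →ₗ[ℚ] Module.Dual ℚ Λ :=
  Λ.subtype.dualMap ∘ₗ Module.Dual.eval ℚ V

/-- The relation component of `α_Λ`: the image of `R` under the simulation. -/
def ImageRel (R : Set (V × V)) (Λ : Submodule ℚ (Module.Dual ℚ V)) :
    Set (Module.Dual ℚ Λ × Module.Dual ℚ Λ) :=
  (fun p : V × V => (evalIn Λ p.1, evalIn Λ p.2)) '' R

/-- `T` is `(Λ, Λ')`-deterministic. -/
def PairDet (R : Set (V × V)) (Λ Λ' : Submodule ℚ (Module.Dual ℚ V)) : Prop :=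
  ∀ x₁ x₂ x₁' x₂' : V, (∀ f ∈ Λ, f x₁ = f x₂) → (x₁, x₁') ∈ R → (x₂, x₂') ∈ R →
    ∀ g ∈ Λ', g x₁' = g x₂'

/-- `Det(T, Λ)`: the functionals `f` such that `T` is `(Λ, span{f})`-deterministic. -/
def DetSet (R : Set (V × V)) (Λ : Submodule ℚ (Module.Dual ℚ V)) :
    Set (Module.Dual ℚ V) :=
  {f | PairDet R Λ (Submodule.span ℚ {f})}

/-- The generating set of the generalized rational eigenspace `E_ℚ(T)`, where
`f : p → p` is the induced map `T|_ω` on the ω-domain `p`. -/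
def GenRatEigenSet (p : Submodule ℚ V) (f : Module.End ℚ p) : Set (Module.Dual ℚ V) :=
  {g | ∃ (l : ℚ) (r : ℕ), 1 ≤ r ∧
    ∀ x : p, g (((f - l • (1 : Module.End ℚ p)) ^ r) x : V) = 0}

end Defs

/-- A bundled finite-dimensional ℚ-vector space. -/
structure QVec where
  carrier : Type
  [grp : AddCommGroup carrier]
  [mod : Module ℚ carrier]
  [fin : FiniteDimensional ℚ carrier]

attribute [instance] QVec.grp QVec.mod QVec.fin


/-! ### Auxiliary lemmas for the reflection theorem -/

section AuxCharpoly
open Polynomial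

theorem aux_charpoly_restrict_dvd {K V : Type*} [Field K] [AddCommGroup V] [Module K V]
    [FiniteDimensional K V] (f : V →ₗ[K] V) (q : Submodule K V)
    (hq : ∀ x ∈ q, f x ∈ q) :
    (f.restrict hq).charpoly ∣ f.charpoly := by
  obtain ⟨q', hc⟩ := Submodule.exists_isCompl q
  let e : (q × q') ≃ₗ[K] V := Submodule.prodEquivOfIsCompl q q' hc
  let g : Module.End K (q × q') := e.symm.conj f
  have hg : g.charpoly = f.charpoly := e.symm.charpoly_conj f
  let b₁ := Module.Free.chooseBasis K q
  let b₂ := Module.Free.chooseBasis K q'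
  let b := b₁.prod b₂
  have key : ∀ j, g (b (Sum.inl j)) = ((f.restrict hq) (b₁ j), 0) := by
    intro j
    have hb : b (Sum.inl j) = (b₁ j, 0) := by
      apply Prod.ext
      · exact b₁.prod_apply_inl_fst b₂ j
      · exact b₁.prod_apply_inl_snd b₂ j
    have he : e (b₁ j, 0) = (b₁ j : V) := by
      simp [e, Submodule.coe_prodEquivOfIsCompl']
    have : g (b (Sum.inl j)) = e.symm (f ((b₁ j : V))) := by
      rw [hb]; simp [g, LinearEquiv.conj_apply, he]
    rw [this]
    have : f (b₁ j : V) = ((f.restrict hq) (b₁ j) : V) := rfl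
    rw [this]
    exact Submodule.prodEquivOfIsCompl_symm_apply_left (p := q) (q := q') hc
      ((f.restrict hq) (b₁ j))
  let M := LinearMap.toMatrix b b g
  have hM11 : M.toBlocks₁₁ = LinearMap.toMatrix b₁ b₁ (f.restrict hq) := by
    ext i j
    simp only [Matrix.toBlocks₁₁, M, LinearMap.toMatrix_apply, Matrix.of_apply]
    rw [key j]
    have : (b.repr ((f.restrict hq) (b₁ j), 0)) (Sum.inl i)
        = (b₁.repr ((f.restrict hq) (b₁ j))) i := by
      simp [b, Basis.prod_repr_inl]
    rw [this]
  have hM21 : M.toBlocks₂₁ = 0 := by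
    ext i j
    simp only [Matrix.toBlocks₂₁, M, LinearMap.toMatrix_apply, Matrix.of_apply]
    rw [key j]
    simp [b, Basis.prod_repr_inr]
  have hMeq : M = Matrix.fromBlocks M.toBlocks₁₁ M.toBlocks₁₂ 0 M.toBlocks₂₂ := by
    rw [← hM21, Matrix.fromBlocks_toBlocks]
  have : f.charpoly = (f.restrict hq).charpoly * (M.toBlocks₂₂).charpoly := by
    rw [← hg, ← LinearMap.charpoly_toMatrix g b]
    show M.charpoly = _
    conv_lhs => rw [hMeq]
    rw [Matrix.charpoly_fromBlocks_zero₂₁, hM11, LinearMap.charpoly_toMatrix]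
  exact ⟨_, this⟩

theorem aux_splits_transfer {A B : Type*} [AddCommGroup A] [Module ℚ A] [FiniteDimensional ℚ A]
    [AddCommGroup B] [Module ℚ B] [FiniteDimensional ℚ B]
    (f : Module.End ℚ A) (g : Module.End ℚ B) (e : B →ₗ[ℚ] A)
    (hinj : Function.Injective e) (hcomm : ∀ x, e (g x) = f (e x))
    (hs : f.charpoly.Splits) :
    g.charpoly.Splits := by
  have hq : ∀ x ∈ LinearMap.range e, f x ∈ LinearMap.range e := by
    rintro x ⟨y, rfl⟩; exact ⟨g y, hcomm y⟩
  let eq : B ≃ₗ[ℚ] LinearMap.range e := LinearEquiv.ofInjective e hinj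
  have hgc : g = eq.symm.conj (f.restrict hq) := by
    apply LinearMap.ext; intro x
    apply eq.injective
    simp only [LinearEquiv.conj_apply, LinearMap.coe_comp, Function.comp_apply,
      LinearEquiv.coe_coe, LinearEquiv.apply_symm_apply]
    apply Subtype.ext
    show (e (g x) : A) = ((f.restrict hq) (eq x) : A)
    rw [hcomm x, LinearMap.restrict_coe_apply]
    rfl
  have : g.charpoly = (f.restrict hq).charpoly := by
    rw [hgc]; exact (eq.symm.charpoly_conj _)
  rw [this]
  exact Polynomial.Splits.of_dvd hs (f.charpoly_monic.ne_zero)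
    (aux_charpoly_restrict_dvd f _ hq)

theorem aux_splits_small {A : Type*} [AddCommGroup A] [Module ℚ A] [FiniteDimensional ℚ A]
    (f : Module.End ℚ A) (h : Module.finrank ℚ A ≤ 1) :
    f.charpoly.Splits := by
  apply Polynomial.Splits.of_natDegree_le_one
  rw [f.charpoly_natDegree]; exact h

end AuxCharpoly

section AuxOmega

theorem aux_omega {U : Type} [AddCommGroup U] [Module ℚ U] [FiniteDimensional ℚ U]
    (H : Set (U × U)) (hlin : IsLinearRel H) (hdet : Deterministic H) :
    ∃ (p : Submodule ℚ U) (f : Module.End ℚ p),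
      (p : Set U) = OmegaDom H ∧ ∀ x : p, ((x : U), (f x : U)) ∈ H := by
  obtain ⟨P, hP⟩ := hlin
  let F : Submodule ℚ U → Submodule ℚ U := fun Q =>
    Submodule.map (LinearMap.fst ℚ U U) (P ⊓ Submodule.comap (LinearMap.snd ℚ U U) Q)
  have memF : ∀ (Q : Submodule ℚ U) (x : U), x ∈ F Q ↔ ∃ y ∈ Q, (x, y) ∈ H := by
    intro Q x
    constructor
    · rintro ⟨⟨a, b⟩, ⟨hab, hb⟩, rfl⟩
      exact ⟨b, hb, by rw [← hP]; exact hab⟩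
    · rintro ⟨y, hy, hxy⟩
      exact ⟨(x, y), ⟨by rw [← hP] at hxy; exact hxy, hy⟩, rfl⟩
  have Fmono : Monotone F := fun Q₁ Q₂ h => Submodule.map_mono (inf_le_inf le_rfl
    (Submodule.comap_mono h))
  let D : ℕ → Submodule ℚ U := fun n => F^[n] ⊤
  have hDsucc : ∀ n, D (n + 1) = F (D n) := fun n => Function.iterate_succ_apply' F n ⊤
  have hDstep : ∀ n, D (n + 1) ≤ D n := by
    intro n
    induction n with
    | zero => exact le_top
    | succ n ih => rw [hDsucc (n+1)]; exact (Fmono ih).trans (hDsucc n).ge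
  obtain ⟨m, ⟨K, hK⟩, hmin⟩ := IsArtinian.set_has_minimal (R := ℚ) (M := U)
    (Set.range D) ⟨D 0, ⟨0, rfl⟩⟩
  have hfix : D (K + 1) = D K := by
    rcases lt_or_eq_of_le (hDstep K) with h | h
    · exact absurd (hK ▸ h) (hmin (D (K + 1)) ⟨K + 1, rfl⟩)
    · exact h
  set p := D K with hp
  have hpF : ∀ x ∈ p, ∃ y ∈ p, (x, y) ∈ H := by
    intro x hx
    have : x ∈ F p := by rw [← hDsucc, hfix]; exact hx
    exact (memF p x).1 this
  let G : Submodule ℚ (U × U) :=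
    P ⊓ Submodule.comap (LinearMap.fst ℚ U U) p ⊓ Submodule.comap (LinearMap.snd ℚ U U) p
  have hGmem : ∀ z : U × U, z ∈ G ↔ z ∈ H ∧ z.1 ∈ p ∧ z.2 ∈ p := by
    intro z
    simp only [G, Submodule.mem_inf, Submodule.mem_comap, and_assoc]
    rw [← hP]; rfl
  let φ : G →ₗ[ℚ] p := LinearMap.codRestrict p
    ((LinearMap.fst ℚ U U).comp G.subtype) (fun z => ((hGmem z).1 z.2).2.1)
  have hφinj : Function.Injective φ := by
    intro z₁ z₂ h
    have h1 : (z₁ : U × U).1 = (z₂ : U × U).1 := congrArg Subtype.val h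
    have hz₁ := ((hGmem z₁).1 z₁.2).1
    have hz₂ := ((hGmem z₂).1 z₂.2).1
    apply Subtype.ext
    apply Prod.ext h1
    have hz₁' : (((z₁ : U × U)).1, ((z₁ : U × U)).2) ∈ H := by simpa using hz₁
    have hz₂' : (((z₁ : U × U)).1, ((z₂ : U × U)).2) ∈ H := by rw [h1]; simpa using hz₂
    exact hdet _ _ _ hz₁' hz₂'
  have hφsurj : Function.Surjective φ := by
    intro x
    obtain ⟨y, hy, hxy⟩ := hpF x x.2
    refine ⟨⟨(x, y), (hGmem _).2 ⟨hxy, x.2, hy⟩⟩, rfl⟩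
  let e : G ≃ₗ[ℚ] p := LinearEquiv.ofBijective φ ⟨hφinj, hφsurj⟩
  let ψ : G →ₗ[ℚ] p := LinearMap.codRestrict p
    ((LinearMap.snd ℚ U U).comp G.subtype) (fun z => ((hGmem z).1 z.2).2.2)
  let f : Module.End ℚ p := ψ.comp e.symm.toLinearMap
  have hgraph : ∀ x : p, ((x : U), (f x : U)) ∈ H := by
    intro x
    have h1 : ((e.symm x : U × U)).1 = (x : U) := congrArg Subtype.val (e.apply_symm_apply x)
    have h2 : (f x : U) = ((e.symm x : U × U)).2 := rfl
    have := ((hGmem (e.symm x)).1 (e.symm x).2).1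
    rw [h2, ← h1]
    exact this
  refine ⟨p, f, ?_, hgraph⟩
  apply Set.Subset.antisymm
  · intro x hx
    refine ⟨fun j => (((⇑f)^[j] ⟨x, hx⟩ : p) : U), by simp, fun k => ?_⟩
    show ((((⇑f)^[k] ⟨x, hx⟩ : p) : U), (((⇑f)^[k+1] ⟨x, hx⟩ : p) : U)) ∈ H
    rw [Function.iterate_succ_apply' (⇑f) k ⟨x, hx⟩]
    exact hgraph _
  · rintro x ⟨u, hu0, hu⟩
    have key : ∀ n j, u j ∈ D n := by
      intro n
      induction n with
      | zero => intro j; exact Submodule.mem_top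
      | succ n ih =>
        intro j
        rw [hDsucc, memF]
        exact ⟨u (j + 1), ih (j + 1), hu j⟩
    rw [← hu0]; exact key K 0

end AuxOmega

section AuxHomog
variable {V : Type} [AddCommGroup V] [Module ℚ V]

theorem aux_homog_char (A : AffineSubspace ℚ (V × V)) {R : Set (V × V)}
    (hA : (A : Set (V × V)) = R) {x₀ x₀' : V} (h0 : (x₀, x₀') ∈ R) :
    Homog R x₀ x₀' = {q : (V × ℚ) × (V × ℚ) | q.1.2 = q.2.2 ∧
      (q.1.1 - q.1.2 • x₀, q.2.1 - q.1.2 • x₀') ∈ A.direction} := by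
  have h0' : (x₀, x₀') ∈ A := by rw [← hA] at h0; exact h0
  ext q
  simp only [Homog, Set.mem_setOf_eq]
  refine and_congr_right fun _ => ?_
  rw [← hA, AffineSubspace.mem_coe, ← AffineSubspace.vsub_right_mem_direction_iff_mem h0']
  have : (q.1.1 + (1 - q.1.2) • x₀, q.2.1 + (1 - q.1.2) • x₀') -ᵥ (x₀, x₀')
      = (q.1.1 - q.1.2 • x₀, q.2.1 - q.1.2 • x₀') := by
    apply Prod.ext <;> simp [sub_smul] <;> abel
  rw [this]

theorem aux_homog_linear {R : Set (V × V)} (haff : IsAffineRel R) {x₀ x₀' : V}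
    (h0 : (x₀, x₀') ∈ R) : IsLinearRel (Homog R x₀ x₀') := by
  obtain ⟨A, hA⟩ := haff
  classical
  let c₁ : ((V × ℚ) × (V × ℚ)) →ₗ[ℚ] ℚ :=
    (LinearMap.snd ℚ V ℚ).comp (LinearMap.fst ℚ (V × ℚ) (V × ℚ))
  let c₂ : ((V × ℚ) × (V × ℚ)) →ₗ[ℚ] ℚ :=
    (LinearMap.snd ℚ V ℚ).comp (LinearMap.snd ℚ (V × ℚ) (V × ℚ))
  let v₁ : ((V × ℚ) × (V × ℚ)) →ₗ[ℚ] V :=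
    (LinearMap.fst ℚ V ℚ).comp (LinearMap.fst ℚ (V × ℚ) (V × ℚ))
  let v₂ : ((V × ℚ) × (V × ℚ)) →ₗ[ℚ] V :=
    (LinearMap.fst ℚ V ℚ).comp (LinearMap.snd ℚ (V × ℚ) (V × ℚ))
  let Φ : ((V × ℚ) × (V × ℚ)) →ₗ[ℚ] V × V :=
    (v₁ - (LinearMap.toSpanSingleton ℚ V x₀).comp c₁).prod
      (v₂ - (LinearMap.toSpanSingleton ℚ V x₀').comp c₁)
  refine ⟨LinearMap.ker (c₁ - c₂) ⊓ Submodule.comap Φ A.direction, ?_⟩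
  rw [aux_homog_char A hA h0]
  ext q
  simp only [Submodule.mem_inf, Submodule.mem_comap, LinearMap.mem_ker, LinearMap.sub_apply,
    Set.mem_setOf_eq, SetLike.mem_coe, Set.mem_setOf_eq]
  constructor
  · rintro ⟨h1, h2⟩
    refine ⟨sub_eq_zero.mp h1, ?_⟩
    convert h2 using 2 <;> rfl
  · rintro ⟨h1, h2⟩
    refine ⟨sub_eq_zero.mpr h1, ?_⟩
    convert h2 using 2 <;> rfl

theorem aux_homog_indep {R : Set (V × V)} (haff : IsAffineRel R) {a b a' b' : V}
    (h1 : (a, b) ∈ R) (h2 : (a', b') ∈ R) :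
    Homog R a b = Homog R a' b' := by
  obtain ⟨A, hA⟩ := haff
  rw [aux_homog_char A hA h1, aux_homog_char A hA h2]
  have key : ∀ (a b a' b' : V), (a, b) ∈ A → (a', b') ∈ A →
      ∀ q : (V × ℚ) × (V × ℚ), (q.1.1 - q.1.2 • a, q.2.1 - q.1.2 • b) ∈ A.direction →
        (q.1.1 - q.1.2 • a', q.2.1 - q.1.2 • b') ∈ A.direction := by
    intro a b a' b' ha ha' q h
    have hd : ((a, b) : V × V) -ᵥ (a', b') ∈ A.direction :=
      AffineSubspace.vsub_mem_direction ha ha'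
    have heq : (q.1.1 - q.1.2 • a', q.2.1 - q.1.2 • b')
        = (q.1.1 - q.1.2 • a, q.2.1 - q.1.2 • b) + q.1.2 • (((a, b) : V × V) -ᵥ (a', b')) := by
      apply Prod.ext <;> simp [smul_sub] <;> abel
    rw [heq]
    exact A.direction.add_mem h (A.direction.smul_mem _ hd)
  have hA1 : (a, b) ∈ A := by rw [← hA] at h1; exact h1
  have hA2 : (a', b') ∈ A := by rw [← hA] at h2; exact h2
  ext q
  simp only [Set.mem_setOf_eq]
  exact and_congr_right fun _ => ⟨key a b a' b' hA1 hA2 q, key a' b' a b hA2 hA1 q⟩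

theorem aux_homog_det {R : Set (V × V)} (hdet : Deterministic R) (x₀ x₀' : V) :
    Deterministic (Homog R x₀ x₀') := by
  rintro x y₁ y₂ ⟨hc₁, hm₁⟩ ⟨hc₂, hm₂⟩
  have := hdet _ _ _ hm₁ hm₂
  have hv : y₁.1 = y₂.1 := add_right_cancel this
  apply Prod.ext hv (hc₁ ▸ hc₂ ▸ rfl)

end AuxHomog

/-- The product relation. -/
def ProdRel {X₁ X₂ : Type} (Z₁ : Set (X₁ × X₁)) (Z₂ : Set (X₂ × X₂)) :
    Set ((X₁ × X₂) × (X₁ × X₂)) :=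
  {q | (q.1.1, q.2.1) ∈ Z₁ ∧ (q.1.2, q.2.2) ∈ Z₂}

section AuxSpectrum
open Polynomial

theorem aux_spectrum_transfer {U U' : Type} [AddCommGroup U] [Module ℚ U]
    [FiniteDimensional ℚ U] [AddCommGroup U'] [Module ℚ U'] [FiniteDimensional ℚ U']
    (H : Set (U × U)) (H' : Set (U' × U'))
    (hlin : IsLinearRel H) (hdet : Deterministic H) (hdet' : Deterministic H')
    (ψ : U →ₗ[ℚ] U') (hψinj : Function.Injective ψ)
    (hsim : ∀ a b : U, (a, b) ∈ H → (ψ a, ψ b) ∈ H')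
    (hspec' : HasRationalSpectrum H') : HasRationalSpectrum H := by
  obtain ⟨p, f, hp, hgraph⟩ := aux_omega H hlin hdet
  obtain ⟨p', f', hp', hgraph', hsplit⟩ := hspec'
  have hmem : ∀ x : p, ψ (x : U) ∈ p' := by
    intro x
    have hx : (x : U) ∈ OmegaDom H := by rw [← hp]; exact x.2
    obtain ⟨u, hu0, hu⟩ := hx
    have : ψ (x : U) ∈ OmegaDom H' :=
      ⟨fun k => ψ (u k), by simp only []; rw [hu0], fun k => hsim _ _ (hu k)⟩
    rw [← SetLike.mem_coe, hp']; exact this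
  let e : p →ₗ[ℚ] p' := LinearMap.codRestrict p' (ψ.comp p.subtype) hmem
  have heinj : Function.Injective e := by
    intro x y h
    have : ψ (x : U) = ψ (y : U) := congrArg Subtype.val h
    exact Subtype.ext (hψinj this)
  have hcomm : ∀ x, e (f x) = f' (e x) := by
    intro x
    apply Subtype.ext
    show ψ ((f x : U)) = (f' (e x) : U')
    have h1 : (ψ (x : U), ψ ((f x : U))) ∈ H' := hsim _ _ (hgraph x)
    have h2 : ((e x : U'), (f' (e x) : U')) ∈ H' := hgraph' (e x)
    exact hdet' _ _ _ h1 h2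
  exact ⟨p, f, hp, hgraph, aux_splits_transfer f' f e heinj hcomm hsplit⟩

theorem aux_prod_spectrum {X₁ X₂ : Type} [AddCommGroup X₁] [Module ℚ X₁]
    [FiniteDimensional ℚ X₁] [AddCommGroup X₂] [Module ℚ X₂] [FiniteDimensional ℚ X₂]
    {H₁ : Set (X₁ × X₁)} {H₂ : Set (X₂ × X₂)}
    (h₁ : HasRationalSpectrum H₁) (h₂ : HasRationalSpectrum H₂) :
    HasRationalSpectrum (ProdRel H₁ H₂) := by
  obtain ⟨p₁, f₁, hp₁, hg₁, hs₁⟩ := h₁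
  obtain ⟨p₂, f₂, hp₂, hg₂, hs₂⟩ := h₂
  let P := p₁.prod p₂
  have hmem₁ : ∀ x : P, (x : X₁ × X₂).1 ∈ p₁ := fun x => x.2.1
  have hmem₂ : ∀ x : P, (x : X₁ × X₂).2 ∈ p₂ := fun x => x.2.2
  let m₁ : P →ₗ[ℚ] p₁ := LinearMap.codRestrict p₁ ((LinearMap.fst ℚ X₁ X₂).comp P.subtype) hmem₁
  let m₂ : P →ₗ[ℚ] p₂ := LinearMap.codRestrict p₂ ((LinearMap.snd ℚ X₁ X₂).comp P.subtype) hmem₂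
  let big : P →ₗ[ℚ] X₁ × X₂ := (p₁.subtype.comp (f₁.comp m₁)).prod (p₂.subtype.comp (f₂.comp m₂))
  have hbig : ∀ x : P, big x ∈ P := fun x => ⟨(f₁ (m₁ x)).2, (f₂ (m₂ x)).2⟩
  let f : Module.End ℚ P := LinearMap.codRestrict P big hbig
  have hgraph : ∀ x : P, ((x : X₁ × X₂), (f x : X₁ × X₂)) ∈ ProdRel H₁ H₂ := by
    intro x
    constructor
    · exact hg₁ (m₁ x)
    · exact hg₂ (m₂ x)
  let back : (p₁ × p₂) →ₗ[ℚ] P := LinearMap.codRestrict P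
    ((p₁.subtype.prodMap p₂.subtype)) (fun y => ⟨y.1.2, y.2.2⟩)
  let E : P ≃ₗ[ℚ] (p₁ × p₂) := LinearEquiv.ofLinear (m₁.prod m₂) back
    (by ext x <;> rfl) (by apply LinearMap.ext; intro x; apply Subtype.ext; rfl)
  have hfconj : f = E.symm.conj (f₁.prodMap f₂) := by
    apply LinearMap.ext; intro x
    apply Subtype.ext
    rfl
  have hsplit : f.charpoly.Splits := by
    rw [hfconj, LinearEquiv.charpoly_conj, LinearMap.charpoly_prodMap]
    exact Polynomial.Splits.mul hs₁ hs₂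
  refine ⟨P, f, ?_, hgraph, hsplit⟩
  ext x
  simp only [Submodule.prod_coe, Set.mem_prod, SetLike.mem_coe]
  constructor
  · rintro ⟨hx1, hx2⟩
    have hx1' : x.1 ∈ OmegaDom H₁ := by rw [← hp₁]; exact hx1
    have hx2' : x.2 ∈ OmegaDom H₂ := by rw [← hp₂]; exact hx2
    obtain ⟨u₁, hu₁0, hu₁⟩ := hx1'
    obtain ⟨u₂, hu₂0, hu₂⟩ := hx2'
    exact ⟨fun k => (u₁ k, u₂ k), by simp only []; rw [hu₁0, hu₂0], fun k => ⟨hu₁ k, hu₂ k⟩⟩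
  · rintro ⟨u, hu0, hu⟩
    constructor
    · show x.1 ∈ (p₁ : Set X₁)
      rw [hp₁]
      exact ⟨fun k => (u k).1, by simp only []; rw [hu0], fun k => (hu k).1⟩
    · show x.2 ∈ (p₂ : Set X₂)
      rw [hp₂]
      exact ⟨fun k => (u k).2, by simp only []; rw [hu0], fun k => (hu k).2⟩

end AuxSpectrum

section AuxQDATS

theorem aux_prod_det {X₁ X₂ : Type} {Z₁ : Set (X₁ × X₁)} {Z₂ : Set (X₂ × X₂)}
    (h₁ : Deterministic Z₁) (h₂ : Deterministic Z₂) :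
    Deterministic (ProdRel Z₁ Z₂) := by
  rintro x y₁ y₂ ⟨h11, h12⟩ ⟨h21, h22⟩
  exact Prod.ext (h₁ _ _ _ h11 h21) (h₂ _ _ _ h12 h22)

theorem aux_qdats_spectrum {X : Type} [AddCommGroup X] [Module ℚ X] [FiniteDimensional ℚ X]
    {Z : Set (X × X)} (hZ : IsQDATS Z) {z : X × X} (hz : z ∈ Z) :
    HasRationalSpectrum (Homog Z z.1 z.2) := by
  rcases hZ.2.2 with h | ⟨t', ht', _, _, hs⟩
  · rw [h] at hz; exact absurd hz (Set.notMem_empty _)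
  · have : Homog Z t'.1 t'.2 = Homog Z z.1 z.2 :=
      aux_homog_indep hZ.1 ht' hz
    rwa [this] at hs

theorem aux_univ_qdats : IsQDATS (Set.univ : Set (PUnit × PUnit)) := by
  have haff : IsAffineRel (Set.univ : Set (PUnit × PUnit)) := ⟨⊤, AffineSubspace.top_coe _ _ _⟩
  have hdet : Deterministic (Set.univ : Set (PUnit × PUnit)) := by
    intro x y₁ y₂ _ _
    exact Subsingleton.elim _ _
  refine ⟨haff, hdet, Or.inr ⟨(PUnit.unit, PUnit.unit), Set.mem_univ _, ?_, ?_, ?_⟩⟩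
  · exact aux_homog_linear haff (Set.mem_univ _)
  · exact aux_homog_det hdet _ _
  · obtain ⟨p, f, hp, hg⟩ := aux_omega (Homog (Set.univ : Set (PUnit × PUnit))
      PUnit.unit PUnit.unit) (aux_homog_linear haff (Set.mem_univ _)) (aux_homog_det hdet _ _)
    refine ⟨p, f, hp, hg, aux_splits_small f ?_⟩
    have h1 : Module.finrank ℚ (PUnit × ℚ) = 1 := by
      rw [Module.finrank_prod, finrank_zero_of_subsingleton, Module.finrank_self]
    calc Module.finrank ℚ p ≤ Module.finrank ℚ (PUnit × ℚ) := Submodule.finrank_le p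
      _ = 1 := h1

theorem aux_prod_qdats {X₁ X₂ : Type} [AddCommGroup X₁] [Module ℚ X₁] [FiniteDimensional ℚ X₁]
    [AddCommGroup X₂] [Module ℚ X₂] [FiniteDimensional ℚ X₂]
    {Z₁ : Set (X₁ × X₁)} {Z₂ : Set (X₂ × X₂)}
    (h₁ : IsQDATS Z₁) (h₂ : IsQDATS Z₂) {z₁ : X₁ × X₁} {z₂ : X₂ × X₂}
    (hz₁ : z₁ ∈ Z₁) (hz₂ : z₂ ∈ Z₂) : IsQDATS (ProdRel Z₁ Z₂) := by
  obtain ⟨⟨A₁, hA₁⟩, hdet₁, -⟩ := id h₁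
  obtain ⟨⟨A₂, hA₂⟩, hdet₂, -⟩ := id h₂
  have haff : IsAffineRel (ProdRel Z₁ Z₂) := by
    let π₁ : ((X₁ × X₂) × (X₁ × X₂)) →ₗ[ℚ] X₁ × X₁ :=
      ((LinearMap.fst ℚ X₁ X₂).comp (LinearMap.fst ℚ (X₁ × X₂) (X₁ × X₂))).prod
        ((LinearMap.fst ℚ X₁ X₂).comp (LinearMap.snd ℚ (X₁ × X₂) (X₁ × X₂)))
    let π₂ : ((X₁ × X₂) × (X₁ × X₂)) →ₗ[ℚ] X₂ × X₂ :=
      ((LinearMap.snd ℚ X₁ X₂).comp (LinearMap.fst ℚ (X₁ × X₂) (X₁ × X₂))).prod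
        ((LinearMap.snd ℚ X₁ X₂).comp (LinearMap.snd ℚ (X₁ × X₂) (X₁ × X₂)))
    refine ⟨(A₁.comap π₁.toAffineMap) ⊓ (A₂.comap π₂.toAffineMap), ?_⟩
    refine Set.ext fun q => ?_
    rw [AffineSubspace.mem_coe, AffineSubspace.mem_inf_iff,
      AffineSubspace.mem_comap, AffineSubspace.mem_comap,
      ]
    constructor
    · rintro ⟨m1, m2⟩
      exact ⟨by rw [← hA₁]; exact m1, by rw [← hA₂]; exact m2⟩
    · rintro ⟨m1, m2⟩
      refine ⟨?_, ?_⟩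
      · rw [← hA₁] at m1; exact m1
      · rw [← hA₂] at m2; exact m2
  have hdet : Deterministic (ProdRel Z₁ Z₂) := aux_prod_det hdet₁ hdet₂
  have hw : ((z₁.1, z₂.1), (z₁.2, z₂.2)) ∈ ProdRel Z₁ Z₂ :=
    ⟨hz₁, hz₂⟩
  refine ⟨haff, hdet, Or.inr ⟨((z₁.1, z₂.1), (z₁.2, z₂.2)), hw, ?_, ?_, ?_⟩⟩
  · exact aux_homog_linear haff hw
  · exact aux_homog_det hdet _ _
  · -- rational spectrum via embedding into the product of the homogenizations
    let ψ : ((X₁ × X₂) × ℚ) →ₗ[ℚ] (X₁ × ℚ) × (X₂ × ℚ) :=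
      { toFun := fun q => ((q.1.1, q.2), (q.1.2, q.2))
        map_add' := fun _ _ => rfl
        map_smul' := fun _ _ => rfl }
    have hψinj : Function.Injective ψ := by
      intro a b h
      have e1 : a.1.1 = b.1.1 := congrArg (fun q => q.1.1) h
      have e2 : a.1.2 = b.1.2 := congrArg (fun q => q.2.1) h
      have e3 : a.2 = b.2 := congrArg (fun q => q.1.2) h
      exact Prod.ext (Prod.ext e1 e2) e3
    apply aux_spectrum_transfer _
      (ProdRel (Homog Z₁ z₁.1 z₁.2) (Homog Z₂ z₂.1 z₂.2))
      (aux_homog_linear haff hw) (aux_homog_det hdet _ _)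
      (aux_prod_det (aux_homog_det hdet₁ _ _) (aux_homog_det hdet₂ _ _))
      ψ hψinj
    · rintro a b ⟨hc, hm⟩
      exact ⟨⟨hc, hm.1⟩, ⟨hc, hm.2⟩⟩
    · exact aux_prod_spectrum (aux_qdats_spectrum h₁ hz₁) (aux_qdats_spectrum h₂ hz₂)

end AuxQDATS

/-- every deterministic affine transition system has a ℚ-DATS-reflection. -/
theorem qdats_reflection
    (V : Type) [AddCommGroup V] [Module ℚ V] [FiniteDimensional ℚ V]
    (R : Set (V × V)) (haff : IsAffineRel R) (hdet : Deterministic R) :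
    ∃ (W : QVec) (S : Set (W.carrier × W.carrier)) (s : V →ₗ[ℚ] W.carrier),
      IsQDATS S ∧ Sim R S s ∧
      ∀ (X : QVec) (Z : Set (X.carrier × X.carrier)), IsQDATS Z →
        ∀ t : V →ₗ[ℚ] X.carrier, Sim R Z t →
          ∃! tbar : W.carrier →ₗ[ℚ] X.carrier, Sim S Z tbar ∧ tbar ∘ₗ s = t := by
  by_cases hR : R = ∅
  · refine ⟨⟨V⟩, ∅, LinearMap.id, ?_, ?_, ?_⟩
    · exact ⟨⟨⊥, AffineSubspace.bot_coe _ _ _⟩,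
        fun x y₁ y₂ h _ => absurd h (Set.notMem_empty _), Or.inl rfl⟩
    · intro x x' hx
      rw [hR] at hx
      exact absurd hx (Set.notMem_empty _)
    · intro X Z hZ t ht
      refine ⟨t, ⟨fun x x' hx => absurd hx (Set.notMem_empty _), LinearMap.comp_id t⟩, ?_⟩
      rintro g ⟨-, hg⟩
      rw [← hg, LinearMap.comp_id]
  · obtain ⟨r₀, hr₀⟩ := Set.nonempty_iff_ne_empty.mpr hR
    set KS : Set (Submodule ℚ V) := {N | ∃ (X : QVec) (Z : Set (X.carrier × X.carrier))
      (t : V →ₗ[ℚ] X.carrier), IsQDATS Z ∧ Sim R Z t ∧ N = LinearMap.ker t} with hKS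
    have hKSne : KS.Nonempty :=
      ⟨_, ⟨⟨PUnit⟩, Set.univ, 0, aux_univ_qdats, fun _ _ _ => Set.mem_univ _, rfl⟩⟩
    have hKSinf : ∀ N₁ ∈ KS, ∀ N₂ ∈ KS, N₁ ⊓ N₂ ∈ KS := by
      rintro N₁ ⟨X₁, Z₁, t₁, hZ₁, hs₁, rfl⟩ N₂ ⟨X₂, Z₂, t₂, hZ₂, hs₂, rfl⟩
      refine ⟨⟨X₁.carrier × X₂.carrier⟩, ProdRel Z₁ Z₂, t₁.prod t₂, ?_, ?_, ?_⟩
      · exact aux_prod_qdats hZ₁ hZ₂ (hs₁ r₀.1 r₀.2 hr₀) (hs₂ r₀.1 r₀.2 hr₀)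
      · intro x x' hx
        exact ⟨hs₁ x x' hx, hs₂ x x' hx⟩
      · rw [LinearMap.ker_prod]
    obtain ⟨N, hNKS, hNmin⟩ := IsArtinian.set_has_minimal (R := ℚ) (M := V) KS hKSne
    have hNle : ∀ M ∈ KS, N ≤ M := by
      intro M hM
      have h1 : N ⊓ M ∈ KS := hKSinf N hNKS M hM
      have h2 : N ⊓ M = N := ((lt_or_eq_of_le inf_le_left).resolve_left (hNmin _ h1))
      rw [← h2]
      exact inf_le_right
    obtain ⟨Xs, Zs, ts, hZs, hsims, hkers⟩ := hNKS
    let ι : (V ⧸ N) →ₗ[ℚ] Xs.carrier := N.liftQ ts hkers.le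
    have hι : ∀ x : V, ι (N.mkQ x) = ts x := fun x => rfl
    have hιinj : Function.Injective ι :=
      LinearMap.ker_eq_bot.mp (Submodule.ker_liftQ_eq_bot N ts hkers.le hkers.ge)
    set S : Set ((V ⧸ N) × (V ⧸ N)) :=
      (fun q : V × V => (N.mkQ q.1, N.mkQ q.2)) '' R with hS
    have hSZ : ∀ a b : V ⧸ N, (a, b) ∈ S → (ι a, ι b) ∈ Zs := by
      rintro a b ⟨⟨x, x'⟩, hm, heq⟩
      have h1 : N.mkQ x = a := congrArg Prod.fst heq
      have h2 : N.mkQ x' = b := congrArg Prod.snd heq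
      rw [← h1, ← h2, hι, hι]
      exact hsims x x' hm
    have hSdet : Deterministic S := by
      intro x y₁ y₂ h₁ h₂
      exact hιinj (hZs.2.1 (ι x) (ι y₁) (ι y₂) (hSZ x y₁ h₁) (hSZ x y₂ h₂))
    have hSaff : IsAffineRel S := by
      obtain ⟨A, hA⟩ := haff
      let F : (V × V) →ₗ[ℚ] (V ⧸ N) × (V ⧸ N) :=
        (N.mkQ.comp (LinearMap.fst ℚ V V)).prod (N.mkQ.comp (LinearMap.snd ℚ V V))
      refine ⟨A.map F.toAffineMap, ?_⟩
      rw [AffineSubspace.coe_map, hA]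
      rfl
    have hw : (N.mkQ r₀.1, N.mkQ r₀.2) ∈ S := ⟨r₀, hr₀, rfl⟩
    have hspecS : HasRationalSpectrum (Homog S (N.mkQ r₀.1) (N.mkQ r₀.2)) := by
      let ψ : ((V ⧸ N) × ℚ) →ₗ[ℚ] Xs.carrier × ℚ :=
        { toFun := fun q => (ι q.1, q.2)
          map_add' := fun _ _ => by simp
          map_smul' := fun _ _ => by simp }
      have hψinj : Function.Injective ψ := by
        intro a b h
        have e1 : ι a.1 = ι b.1 := congrArg Prod.fst h
        have e2 : a.2 = b.2 := congrArg (Prod.snd : Xs.carrier × ℚ → ℚ) h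
        exact Prod.ext (hιinj e1) e2
      apply aux_spectrum_transfer _ (Homog Zs (ts r₀.1) (ts r₀.2))
        (aux_homog_linear hSaff hw) (aux_homog_det hSdet _ _)
        (aux_homog_det hZs.2.1 _ _) ψ hψinj
      · rintro a b ⟨hc, hm⟩
        refine ⟨hc, ?_⟩
        have h3 := hSZ _ _ hm
        simp only [map_add, map_smul, hι] at h3; exact h3
      · exact aux_qdats_spectrum hZs (hsims r₀.1 r₀.2 hr₀)
    have hSqdats : IsQDATS S :=
      ⟨hSaff, hSdet, Or.inr ⟨(N.mkQ r₀.1, N.mkQ r₀.2), hw,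
        aux_homog_linear hSaff hw, aux_homog_det hSdet _ _, hspecS⟩⟩
    refine ⟨⟨V ⧸ N⟩, S, N.mkQ, hSqdats, fun x x' hx => ⟨(x, x'), hx, rfl⟩, ?_⟩
    intro X Z hZ t ht
    have hker : N ≤ LinearMap.ker t := hNle _ ⟨X, Z, t, hZ, ht, rfl⟩
    refine ⟨N.liftQ t hker, ⟨?_, N.liftQ_mkQ t hker⟩, ?_⟩
    · rintro a b ⟨⟨x, x'⟩, hm, heq⟩
      have h1 : N.mkQ x = a := congrArg Prod.fst heq
      have h2 : N.mkQ x' = b := congrArg Prod.snd heq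
      rw [← h1, ← h2]
      show (t x, t x') ∈ Z
      exact ht x x' hm
    · rintro g ⟨-, hg⟩
      exact Submodule.linearMap_qext N (hg.trans (N.liftQ_mkQ t hker).symm)
end

section
/- Let T₀ be the transition system on the one-dimensional ℚ-vector space ℚ whose relation is {(0,0)}. There do not exist a finite-dimensional ℚ-vector space W, a ℚ-linear map g : W → W, a vector b ∈ W, and a ℚ-linear map s : ℚ → W with g(s(0)) + b = s(0), such that for every finite-dimensional ℚ-vector space U, every ℚ-linear map h : U → U, every b′ ∈ U, and every ℚ-linear map t : ℚ → U with h(t(0)) + b′ = t(0), there exists a unique ℚ-linear map t̄ : W → U satisfying t̄ ∘ s = t and t̄(g(x) + b) = h(t̄(x)) + b′ for all x ∈ W. (I.e., T₀ has no reflection in the category of total deterministic affine transition systems.) -/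
open Module

/-- the transition system `{(0,0)}` on ℚ has no reflection in the
category of total deterministic affine transition systems (graphs of affine maps). -/
theorem no_tdats_reflection :
    ¬ ∃ (W : QVec) (g : W.carrier →ₗ[ℚ] W.carrier) (b : W.carrier)
        (s : ℚ →ₗ[ℚ] W.carrier),
        g (s 0) + b = s 0 ∧
        ∀ (U : QVec) (h : U.carrier →ₗ[ℚ] U.carrier) (b' : U.carrier)
          (t : ℚ →ₗ[ℚ] U.carrier),
          h (t 0) + b' = t 0 →
          ∃! tbar : W.carrier →ₗ[ℚ] U.carrier,
            tbar ∘ₗ s = t ∧ ∀ x : W.carrier, tbar (g x + b) = h (tbar x) + b' := by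
  rintro ⟨W, g, b, s, hfix, hrefl⟩
  -- For each rational c, get a functional tc with tc ∘ s = id and tc ∘ (g·+b) = c·tc
  have key : ∀ c : ℚ, ∃ tc : W.carrier →ₗ[ℚ] ℚ,
      (tc ∘ₗ s = LinearMap.id) ∧ ∀ x, tc (g x + b) = c * tc x := by
    intro c
    obtain ⟨tc, ⟨hcomp, heq⟩, -⟩ :=
      hrefl ⟨ℚ⟩ (c • LinearMap.id) 0 LinearMap.id (by simp)
    exact ⟨tc, hcomp, fun x => by simpa using heq x⟩
  choose F hFcomp hFeig using key
  have hb : b = 0 := by simpa using hfix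
  have hne : ∀ c : ℚ, F c ≠ 0 := by
    intro c h0
    have h1 : (F c ∘ₗ s) 1 = (LinearMap.id : ℚ →ₗ[ℚ] ℚ) 1 := by rw [hFcomp]
    rw [h0] at h1
    simp at h1
  have hev : ∀ c : ℚ,
      Module.End.HasEigenvector (g.dualMap : Module.End ℚ (Module.Dual ℚ W.carrier)) c (F c) := by
    intro c
    refine ⟨Module.End.mem_eigenspace_iff.2 ?_, hne c⟩
    ext x
    have := hFeig c x
    rw [hb, add_zero] at this
    simpa [LinearMap.dualMap_apply] using this
  have hli := Module.End.eigenvectors_linearIndependent'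
    (g.dualMap : Module.End ℚ (Module.Dual ℚ W.carrier)) id Function.injective_id F
    (fun c => hev c)
  have : Finite ℚ := hli.finite
  exact absurd this (by simp [not_finite_iff_infinite]; infer_instance)
end

section
/- Let V and W be finite-dimensional ℚ-vector spaces, let R ⊆ V × V be any set, let S be an affine subspace of W × W, and let s : V → W be a ℚ-linear map such that (s x, s x′) ∈ S for every (x,x′) ∈ R. Then (s y, s y′) ∈ S for every (y,y′) in the affine span (over ℚ) of R. Consequently, the affine hull of R, together with the identity simulation, is a best affine abstraction of the transition system (V,R): every linear simulation from (V,R) to an affine transition system is also a linear simulation from (V, affineSpan R) to that system. -/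
open Module

/-- a linear simulation into an affine transition system extends from
`R` to the affine span of `R`; i.e. the affine hull is a best affine abstraction. -/
theorem affine_hull_best_abstraction
    (V W : Type) [AddCommGroup V] [Module ℚ V] [FiniteDimensional ℚ V]
    [AddCommGroup W] [Module ℚ W] [FiniteDimensional ℚ W]
    (R : Set (V × V)) (S : AffineSubspace ℚ (W × W)) (s : V →ₗ[ℚ] W)
    (hsim : ∀ x x' : V, (x, x') ∈ R → (s x, s x') ∈ S) :
    ∀ y y' : V, (y, y') ∈ affineSpan ℚ R → (s y, s y') ∈ S := by
  intro y y' hy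
  let t : (V × V) →ᵃ[ℚ] (W × W) := ((s.prodMap s).toAffineMap)
  have key : affineSpan ℚ R ≤ S.comap t := by
    apply affineSpan_le.mpr
    intro p hp
    exact hsim p.1 p.2 hp
  exact key hy
end

section
/- (Dual space simulation) Let V be a finite-dimensional ℚ-vector space, R ⊆ V × V a relation, and Λ a ℚ-linear subspace of the dual space V* = Module.Dual ℚ V. Let (U,s) = α_Λ((V,R)), i.e., s : V → Λ* sends x to the evaluation functional f ↦ f(x) and U is the transition system on Λ* with relation s[R] = {(s x, s x′) : (x,x′) ∈ R}. Suppose Z = (W,S) is a transition system on a finite-dimensional ℚ-vector space W and z : V → W is a linear simulation from (V,R) to Z such that for every g ∈ W*, the functional g ∘ z belongs to Λ. Then there exists a unique ℚ-linear map z̄ : Λ* → W such that z̄ ∘ s = z and z̄ is a linear simulation from U to Z. -/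
open Module

/-- Dual space simulation: if `z : T → Z` is a linear simulation whose
dual range is contained in `Λ`, then `z` factors uniquely through `α_Λ(T)`. -/
theorem dual_space_simulation
    (V W : Type) [AddCommGroup V] [Module ℚ V] [FiniteDimensional ℚ V]
    [AddCommGroup W] [Module ℚ W] [FiniteDimensional ℚ W]
    (R : Set (V × V)) (Λ : Submodule ℚ (Module.Dual ℚ V))
    (S : Set (W × W)) (z : V →ₗ[ℚ] W)
    (hzsim : Sim R S z)
    (hrange : ∀ g : Module.Dual ℚ W, g ∘ₗ z ∈ Λ) :
    ∃! zbar : Module.Dual ℚ Λ →ₗ[ℚ] W,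
      zbar ∘ₗ evalIn Λ = z ∧ Sim (ImageRel R Λ) S zbar := by
  have hsurj : Function.Surjective (evalIn Λ) := by
    have h1 : Function.Surjective (Λ.subtype.dualMap) :=
      Λ.subtype.dualMap_surjective_of_injective Λ.injective_subtype
    have h2 : Function.Surjective (Module.Dual.eval ℚ V) :=
      (Module.evalEquiv ℚ V).surjective
    exact h1.comp h2
  set ζ : Module.Dual ℚ W →ₗ[ℚ] Λ := z.dualMap.codRestrict Λ hrange with hζ
  set zbar : Module.Dual ℚ Λ →ₗ[ℚ] W :=
    (Module.evalEquiv ℚ W).symm.toLinearMap ∘ₗ ζ.dualMap with hzbar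
  have hfact : zbar ∘ₗ evalIn Λ = z := by
    apply LinearMap.ext
    intro x
    have : ζ.dualMap (evalIn Λ x) = Module.evalEquiv ℚ W (z x) := by
      apply LinearMap.ext
      intro g
      rfl
    simp only [hzbar, LinearMap.comp_apply, LinearEquiv.coe_coe, this]
    exact (Module.evalEquiv ℚ W).symm_apply_apply (z x)
  refine ⟨zbar, ⟨hfact, ?_⟩, ?_⟩
  · rintro a a' ⟨⟨x, x'⟩, hxR, hmap⟩
    have hx : a = evalIn Λ x := by
      simpa using congrArg Prod.fst hmap.symm
    have hx' : a' = evalIn Λ x' := by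
      simpa using congrArg Prod.snd hmap.symm
    have h1 : zbar a = z x := by rw [hx, ← LinearMap.comp_apply, hfact]
    have h2 : zbar a' = z x' := by rw [hx', ← LinearMap.comp_apply, hfact]
    rw [h1, h2]
    exact hzsim x x' hxR
  · intro y ⟨hyfact, _⟩
    apply LinearMap.ext
    intro a
    obtain ⟨x, rfl⟩ := hsurj a
    rw [← LinearMap.comp_apply, hyfact, ← LinearMap.comp_apply zbar, hfact]
end

section
/- (Determinization) Let T = (V,R) be a transition system on a finite-dimensional ℚ-vector space V. Suppose Δ is a ℚ-linear subspace of V* = Module.Dual ℚ V satisfying: (fixpoint) Δ = {f ∈ V* : T is (Δ, span{f})-deterministic}, and (greatest post-fixpoint) every subspace Λ ⊆ V* with Λ ⊆ {f ∈ V* : T is (Λ, span{f})-deterministic} satisfies Λ ⊆ Δ. Let (U,s) = α_Δ(T). Then U is deterministic, and (U,s) is a deterministic reflection of T: for every transition system Z = (W,S) on a finite-dimensional ℚ-vector space with S deterministic, and every linear simulation u : T → Z, there exists a unique linear simulation ū : U → Z with ū ∘ s = u. -/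
open Module

/-- Determinization: if `Δ` is the greatest fixpoint of `Λ ↦ Det(T,Λ)`,
then `α_Δ(T)` is deterministic and is a deterministic reflection of `T`. -/
theorem determinization
    (V : Type) [AddCommGroup V] [Module ℚ V] [FiniteDimensional ℚ V]
    (R : Set (V × V)) (Δ : Submodule ℚ (Module.Dual ℚ V))
    (hfix : (Δ : Set (Module.Dual ℚ V)) = DetSet R Δ)
    (hgreatest : ∀ Λ : Submodule ℚ (Module.Dual ℚ V),
      (Λ : Set (Module.Dual ℚ V)) ⊆ DetSet R Λ → Λ ≤ Δ) :
    Deterministic (ImageRel R Δ) ∧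
    ∀ (X : QVec) (S : Set (X.carrier × X.carrier)), Deterministic S →
      ∀ u : V →ₗ[ℚ] X.carrier, Sim R S u →
        ∃! ubar : Module.Dual ℚ Δ →ₗ[ℚ] X.carrier,
          Sim (ImageRel R Δ) S ubar ∧ ubar ∘ₗ evalIn Δ = u := by
    classical
  -- `s := evalIn Δ` identifies points exactly when all functionals in `Δ` agree
  have hs_eq : ∀ x y : V, evalIn Δ x = evalIn Δ y ↔ ∀ f ∈ Δ, f x = f y := by
    intro x y
    constructor
    · intro h f hf
      have := LinearMap.congr_fun h ⟨f, hf⟩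
      simpa [evalIn] using this
    · intro h
      ext ⟨f, hf⟩
      simpa [evalIn] using h f hf
  have hdet : Deterministic (ImageRel R Δ) := by
    rintro a b₁ b₂ ⟨⟨x₁, x₁'⟩, hx₁, hpa₁⟩ ⟨⟨x₂, x₂'⟩, hx₂, hpa₂⟩
    obtain ⟨ha₁, hb₁⟩ := Prod.mk.injEq .. ▸ hpa₁
    obtain ⟨ha₂, hb₂⟩ := Prod.mk.injEq .. ▸ hpa₂
    subst hb₁; subst hb₂
    have hagree : ∀ f ∈ Δ, f x₁ = f x₂ :=
      (hs_eq x₁ x₂).mp (ha₁.trans ha₂.symm)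
    rw [hs_eq]
    intro f hf
    have hfd : f ∈ DetSet R Δ := hfix ▸ hf
    exact hfd x₁ x₂ x₁' x₂' hagree hx₁ hx₂ f (Submodule.mem_span_singleton_self f)
  refine ⟨hdet, ?_⟩
  intro X S hS u hu
  -- the pullback of all functionals on X is a post-fixpoint, hence contained in Δ
  set Λ : Submodule ℚ (Module.Dual ℚ V) := LinearMap.range u.dualMap with hΛdef
  have hΛpost : (Λ : Set (Module.Dual ℚ V)) ⊆ DetSet R Λ := by
    rintro f ⟨φ, rfl⟩
    intro x₁ x₂ x₁' x₂' hagree h1 h2 g hg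
    have hux : u x₁ = u x₂ := by
      rw [← sub_eq_zero, ← Module.forall_dual_apply_eq_zero_iff ℚ (u x₁ - u x₂)]
      intro ψ
      have := hagree (u.dualMap ψ) ⟨ψ, rfl⟩
      simp only [LinearMap.dualMap_apply] at this
      simp [this]
    have hux' : u x₁' = u x₂' :=
      hS (u x₁) (u x₁') (u x₂') (hu x₁ x₁' h1) (hux ▸ hu x₂ x₂' h2)
    obtain ⟨c, rfl⟩ := Submodule.mem_span_singleton.mp hg
    simp [hux']
  have hΛΔ : Λ ≤ Δ := hgreatest Λ hΛpost
  -- `evalIn Δ` is surjective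
  have hsurj : Function.Surjective (evalIn Δ) := by
    have h1 : Function.Surjective (Δ.subtype.dualMap) :=
      LinearMap.dualMap_surjective_of_injective Δ.injective_subtype
    have h2 : Function.Surjective (Module.Dual.eval ℚ V) := by
      rw [← Module.evalEquiv_toLinearMap (R := ℚ) (M := V)]
      exact (Module.evalEquiv ℚ V).surjective
    exact h1.comp h2
  -- `ker (evalIn Δ) ≤ ker u`
  have hker : LinearMap.ker (evalIn Δ) ≤ LinearMap.ker u := by
    intro x hx
    have hx0 : evalIn Δ x = evalIn Δ 0 := by
      simpa [map_zero] using (LinearMap.mem_ker.mp hx)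
    have hall : ∀ f ∈ Δ, f x = f 0 := (hs_eq x 0).mp hx0
    have : u x = 0 := by
      rw [← Module.forall_dual_apply_eq_zero_iff ℚ (u x)]
      intro ψ
      have := hall (u.dualMap ψ) (hΛΔ ⟨ψ, rfl⟩)
      simpa using this
    exact LinearMap.mem_ker.mpr this
  -- build ubar via the quotient
  let e : (V ⧸ LinearMap.ker (evalIn Δ)) ≃ₗ[ℚ] Module.Dual ℚ Δ :=
    (evalIn Δ).quotKerEquivOfSurjective hsurj
  have he : ∀ x : V, e (Submodule.Quotient.mk x) = evalIn Δ x := fun x => rfl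
  let ubar : Module.Dual ℚ Δ →ₗ[ℚ] X.carrier :=
    ((LinearMap.ker (evalIn Δ)).liftQ u hker) ∘ₗ (e.symm : _ →ₗ[ℚ] _)
  have hcomp : ubar ∘ₗ evalIn Δ = u := by
    ext x
    show ((LinearMap.ker (evalIn Δ)).liftQ u hker) (e.symm (evalIn Δ x)) = u x
    rw [← he x, e.symm_apply_apply, Submodule.liftQ_apply]
  have hpt : ∀ x : V, ubar (evalIn Δ x) = u x := fun x => LinearMap.congr_fun hcomp x
  refine ⟨ubar, ⟨?_, hcomp⟩, ?_⟩
  · rintro a b ⟨⟨x, x'⟩, hxx', heq⟩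
    obtain ⟨ha, hb⟩ := Prod.mk.injEq .. ▸ heq
    subst ha; subst hb
    rw [hpt x, hpt x']
    exact hu x x' hxx'
  · rintro v ⟨-, hvcomp⟩
    apply LinearMap.ext
    intro y
    obtain ⟨x, rfl⟩ := hsurj y
    rw [hpt x]
    exact LinearMap.congr_fun hvcomp x
end

section
/- Let A, B be m × n matrices over ℚ, c ∈ ℚ^m, M a p × n matrix over ℚ, and suppose the relation R = {(x,x′) ∈ ℚ^n × ℚ^n : A·x′ = B·x + c} is nonempty. Then for every f ∈ ℚ^n, the following are equivalent: (1) for all x₁,x₂,x₁′,x₂′ ∈ ℚ^n with A·x₁′ = B·x₁ + c, A·x₂′ = B·x₂ + c, and vᵀx₁ = vᵀx₂ for every v ∈ ℚ^n with M·v = 0, one has fᵀx₁′ = fᵀx₂′; (2) there exists y ∈ ℚ^m with M·(Bᵀ·y) = 0 and Aᵀ·y = f. (This is the paper's closed-form computation of Det(T,Λ) for an affine transition system T = (ℚ^n, R) and Λ = {v : M·v = 0}.) -/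
open Module

/-- Factor a functional vanishing on the kernel of `L` through `L`. -/
lemma exists_dual_factor {E F : Type} [AddCommGroup E] [Module ℚ E]
    [AddCommGroup F] [Module ℚ F]
    (L : E →ₗ[ℚ] F) (g : E →ₗ[ℚ] ℚ) (hk : LinearMap.ker L ≤ LinearMap.ker g) :
    ∃ h : F →ₗ[ℚ] ℚ, ∀ x, h (L x) = g x := by
  set gbar := (LinearMap.ker L).liftQ g hk with hgbar
  set ψ : LinearMap.range L →ₗ[ℚ] ℚ :=
    gbar ∘ₗ (L.quotKerEquivRange.symm : LinearMap.range L →ₗ[ℚ] E ⧸ LinearMap.ker L)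
  obtain ⟨h, hh⟩ := LinearMap.exists_extend ψ
  refine ⟨h, fun x => ?_⟩
  have h1 : h (L x) = ψ ⟨L x, LinearMap.mem_range_self L x⟩ := by
    have := congrFun (congrArg DFunLike.coe hh) ⟨L x, LinearMap.mem_range_self L x⟩
    simpa using this
  rw [h1]
  show gbar (L.quotKerEquivRange.symm ⟨L x, _⟩) = g x
  rw [L.quotKerEquivRange_symm_apply_image x]
  simp [hgbar]


open Matrix in
/-- closed-form computation of `Det(T, Λ)` for an affine transition
system `R = {(x,x') : A x' = B x + c}` and `Λ = {v : M v = 0}`. -/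
theorem detSet_closed_form
    (m n p : ℕ)
    (A B : Matrix (Fin m) (Fin n) ℚ) (c : Fin m → ℚ)
    (M : Matrix (Fin p) (Fin n) ℚ)
    (hne : ∃ x x' : Fin n → ℚ, A.mulVec x' = B.mulVec x + c)
    (f : Fin n → ℚ) :
    (∀ x₁ x₂ x₁' x₂' : Fin n → ℚ,
        A.mulVec x₁' = B.mulVec x₁ + c →
        A.mulVec x₂' = B.mulVec x₂ + c →
        (∀ v : Fin n → ℚ, M.mulVec v = 0 → v ⬝ᵥ x₁ = v ⬝ᵥ x₂) →
        f ⬝ᵥ x₁' = f ⬝ᵥ x₂') ↔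
    (∃ y : Fin m → ℚ, M.mulVec (B.transpose.mulVec y) = 0 ∧ A.transpose.mulVec y = f) := by
  constructor
  · intro h
    obtain ⟨x₀, x₀', h₀⟩ := hne
    set L : (Fin n → ℚ) × (Fin p → ℚ) →ₗ[ℚ] (Fin m → ℚ) :=
      A.mulVecLin ∘ₗ LinearMap.fst ℚ _ _ - (B * Mᵀ).mulVecLin ∘ₗ LinearMap.snd ℚ _ _ with hL
    set g : (Fin n → ℚ) × (Fin p → ℚ) →ₗ[ℚ] ℚ :=
      { toFun := fun q => f ⬝ᵥ q.1
        map_add' := fun a b => by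
          show f ⬝ᵥ (a.1 + b.1) = f ⬝ᵥ a.1 + f ⬝ᵥ b.1
          simp [dotProduct_add]
        map_smul' := fun r a => by
          show f ⬝ᵥ (r • a.1) = r * f ⬝ᵥ a.1
          rw [dotProduct_smul, smul_eq_mul] } with hg
    have hk : LinearMap.ker L ≤ LinearMap.ker g := by
      rintro ⟨d', w⟩ hd
      have hd' : A.mulVec d' = B.mulVec (Mᵀ.mulVec w) := by
        have h1 : A.mulVec d' - (B * Mᵀ).mulVec w = 0 := hd
        have h2 := sub_eq_zero.mp h1
        rwa [← Matrix.mulVec_mulVec] at h2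
      have key := h (x₀ + Mᵀ.mulVec w) x₀ (x₀' + d') x₀'
        (by rw [Matrix.mulVec_add, Matrix.mulVec_add, h₀, hd']; ring)
        h₀
        (fun v hv => by
          rw [dotProduct_add]
          have hz : v ⬝ᵥ Mᵀ.mulVec w = 0 := by
            rw [Matrix.dotProduct_mulVec, Matrix.vecMul_transpose, hv, zero_dotProduct]
          rw [hz, add_zero])
      rw [dotProduct_add] at key
      have : f ⬝ᵥ d' = 0 := by linarith
      simpa [hg] using this
    obtain ⟨hfun, hh⟩ := exists_dual_factor L g hk
    set y : Fin m → ℚ := fun i => hfun (Pi.single i 1) with hy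
    have hdot : ∀ z : Fin m → ℚ, hfun z = y ⬝ᵥ z := by
      intro z
      have hz : ∑ i, Pi.single i (z i) = z := Finset.univ_sum_single z
      calc hfun z = hfun (∑ i, Pi.single i (z i)) := by rw [hz]
        _ = ∑ i, hfun (Pi.single i (z i)) := map_sum _ _ _
        _ = ∑ i, y i * z i := by
            refine Finset.sum_congr rfl fun i _ => ?_
            have hs : Pi.single i (z i) = z i • (Pi.single i 1 : Fin m → ℚ) := by
              ext j
              by_cases hji : j = i
              · subst hji; simp
              · simp [Pi.single_eq_of_ne hji]
            rw [hs, _root_.map_smul, smul_eq_mul]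
            simp [hy, mul_comm]
        _ = y ⬝ᵥ z := rfl
    refine ⟨y, ?_, ?_⟩
    · apply dotProduct_eq_zero
      intro w
      have e0 : L (0, w) = -((B * Mᵀ).mulVec w) := by
        simp [hL, LinearMap.fst_apply, LinearMap.snd_apply, Matrix.mulVec_mulVec]
        rw [← Matrix.mulVec_mulVec, Matrix.mulVec_transpose]
      have h1 := hh (0, w)
      rw [e0, map_neg, hdot] at h1
      have h1' : y ⬝ᵥ (B * Mᵀ).mulVec w = 0 := by
        have : g (0, w) = 0 := by simp [hg]
        rw [this] at h1; linarith
      rw [Matrix.dotProduct_mulVec] at h1'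
      have h2 : Matrix.vecMul y (B * Mᵀ) = M.mulVec (Bᵀ.mulVec y) := by
        rw [← Matrix.vecMul_vecMul, Matrix.vecMul_transpose, Matrix.mulVec_transpose]
      rwa [h2] at h1'
    · apply dotProduct_eq
      intro d'
      have e0 : L (d', 0) = A.mulVec d' := by simp [hL, LinearMap.fst_apply, LinearMap.snd_apply, Matrix.mulVec_mulVec]
      have h1 := hh (d', 0)
      rw [e0, hdot] at h1
      have h1' : g (d', 0) = f ⬝ᵥ d' := by simp [hg]
      rw [h1'] at h1
      rw [Matrix.mulVec_transpose, ← Matrix.dotProduct_mulVec, h1]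
  · rintro ⟨y, hM, hA⟩ x₁ x₂ x₁' x₂' h₁ h₂ hv
    have e1 : f ⬝ᵥ x₁' = (Bᵀ.mulVec y) ⬝ᵥ x₁ + y ⬝ᵥ c := by
      rw [← hA, Matrix.mulVec_transpose, ← Matrix.dotProduct_mulVec, h₁, dotProduct_add,
        Matrix.dotProduct_mulVec, ← Matrix.mulVec_transpose]
    have e2 : f ⬝ᵥ x₂' = (Bᵀ.mulVec y) ⬝ᵥ x₂ + y ⬝ᵥ c := by
      rw [← hA, Matrix.mulVec_transpose, ← Matrix.dotProduct_mulVec, h₂, dotProduct_add,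
        Matrix.dotProduct_mulVec, ← Matrix.mulVec_transpose]
    rw [e1, e2, hv _ hM]
end

section
/- Let T = (V,R) be a deterministic linear transition system on a finite-dimensional ℚ-vector space V, let U = (W,S) be a deterministic linear transition system with rational spectrum on a finite-dimensional ℚ-vector space W, and let s : V → W be a linear simulation from T to U. Then for every functional g ∈ W* = Module.Dual ℚ W, the functional g ∘ s belongs to the generalized rational eigenspace E_ℚ(T). -/
open Module

section Aux

open Polynomial

variable {V : Type} [AddCommGroup V] [Module ℚ V]

/-- A functional vanishing on a submodule-defined... -/
lemma mem_genRatEigenSet_of_vanishes (p : Submodule ℚ V) (f : Module.End ℚ p)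
    (φ : Module.Dual ℚ V) (h : ∀ x : p, φ (x : V) = 0) : φ ∈ GenRatEigenSet p f := by
  exact ⟨0, 1, le_refl 1, fun x => h _⟩

lemma coprime_pow_prod (a : ℚ) (m : ℕ) (M : Multiset ℚ) (ha : a ∉ M) :
    IsCoprime ((X - C a) ^ m) (M.map (fun l => X - C l)).prod := by
  apply IsCoprime.pow_left
  induction M using Multiset.induction_on with
  | empty => simp [isCoprime_one_right]
  | cons b s ih =>
    simp only [Multiset.map_cons, Multiset.prod_cons]
    refine IsCoprime.mul_right ?_ (ih (fun h => ha (Multiset.mem_cons_of_mem h)))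
    have hab : a ≠ b := fun hEq => ha (by rw [hEq]; exact Multiset.mem_cons_self b s)
    exact Polynomial.isCoprime_X_sub_C_of_isUnit_sub
      (by simpa using sub_ne_zero_of_ne hab)

lemma key_lemma (p : Submodule ℚ V) (f : Module.End ℚ p)
    (π : V →ₗ[ℚ] p) (hπ : ∀ x : p, π (x : V) = x)
    (M : Multiset ℚ) (φ : Module.Dual ℚ V)
    (hφ : ∀ x : p, φ ((Polynomial.aeval f (M.map (fun l => X - C l)).prod x : p) : V) = 0) :
    φ ∈ Submodule.span ℚ (GenRatEigenSet p f) := by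
  induction M using Multiset.strongInductionOn generalizing φ with
  | ih M IH =>
  rcases M.empty_or_exists_mem with rfl | ⟨a, ha⟩
  · refine Submodule.subset_span (mem_genRatEigenSet_of_vanishes p f φ (fun x => ?_))
    simpa using hφ x
  · classical
    set m := M.count a with hm
    have hm1 : 1 ≤ m := Multiset.one_le_count_iff_mem.mpr ha
    set M' := M.filter (fun b => ¬ a = b) with hM'
    have hMsplit : M = Multiset.replicate m a + M' := by
      rw [hM', hm]
      conv_lhs => rw [← Multiset.filter_add_not (fun b => a = b) M]
      rw [Multiset.filter_eq]
    have hanotM' : a ∉ M' := by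
      simp [hM', Multiset.mem_filter]
    set A : ℚ[X] := (X - C a) ^ m with hA
    set B : ℚ[X] := (M'.map (fun l => X - C l)).prod with hB
    have hprod : (M.map (fun l => X - C l)).prod = A * B := by
      rw [hMsplit]; simp [hA, hB, Multiset.map_replicate, Multiset.prod_replicate]
    have hcop : IsCoprime A B := coprime_pow_prod a m M' hanotM'
    obtain ⟨u, v, huv⟩ := hcop
    -- endomorphisms
    set aA : Module.End ℚ p := aeval f A with haA
    set aB : Module.End ℚ p := aeval f B with haB
    set au : Module.End ℚ p := aeval f u with hau
    set av : Module.End ℚ p := aeval f v with hav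
    have hone : au * aA + av * aB = 1 := by
      rw [hau, haA, hav, haB, ← map_mul, ← map_mul, ← map_add, huv, map_one]
    set φ₁ : Module.Dual ℚ V := φ ∘ₗ p.subtype ∘ₗ (au * aA : Module.End ℚ p) ∘ₗ π with hφ₁
    set φ₂ : Module.Dual ℚ V := φ ∘ₗ p.subtype ∘ₗ (av * aB : Module.End ℚ p) ∘ₗ π with hφ₂
    have hzero : ∀ (w : ℚ[X]) (x : p),
        φ ((aeval f (w * (M.map (fun l => X - C l)).prod) x : p) : V) = 0 := by
      intro w x
      rw [mul_comm, map_mul]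
      simpa [Module.End.mul_apply] using hφ ((aeval f w) x)
    have h1 : φ₁ ∈ Submodule.span ℚ (GenRatEigenSet p f) := by
      refine IH M' ?_ φ₁ ?_
      · refine lt_of_le_of_ne (Multiset.filter_le _ _) (fun hEq => ?_)
        have : a ∈ M' := hEq ▸ ha
        exact hanotM' this
      · intro x
        simp only [hφ₁, LinearMap.comp_apply, hπ]
        have : (au * aA) ((aeval f B) x) = (aeval f (u * (M.map (fun l => X - C l)).prod)) x := by
          have e : u * (M.map (fun l => X - C l)).prod = u * (A * B) := by rw [hprod]
          rw [e, map_mul, map_mul, ← hau, ← haA]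
          simp [Module.End.mul_apply]
        rw [this]
        exact hzero u x
    have h2 : φ₂ ∈ GenRatEigenSet p f := by
      refine ⟨a, m, hm1, fun x => ?_⟩
      have hfl : (f - a • (1 : Module.End ℚ p)) ^ m = aA := by
        rw [haA, hA, map_pow, map_sub, aeval_X, aeval_C, Algebra.algebraMap_eq_smul_one]
      rw [hfl]
      simp only [hφ₂, LinearMap.comp_apply, hπ]
      have : (av * aB) (aA x) = (aeval f (v * (M.map (fun l => X - C l)).prod)) x := by
        have e : v * (M.map (fun l => X - C l)).prod = v * (B * A) := by rw [hprod]; ring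
        rw [e, map_mul, map_mul, ← hav, ← haB, ← haA]
        simp [Module.End.mul_apply]
      rw [this]
      exact hzero v x
    have h0 : φ - φ₁ - φ₂ ∈ GenRatEigenSet p f := by
      apply mem_genRatEigenSet_of_vanishes
      intro x
      simp only [LinearMap.sub_apply, hφ₁, hφ₂, LinearMap.comp_apply, hπ]
      have : (au * aA) x + (av * aB) x = x := by
        rw [← LinearMap.add_apply, hone, Module.End.one_apply]
      have e : φ (p.subtype ((au * aA) x)) + φ (p.subtype ((av * aB) x)) = φ (x : V) := by
        rw [← map_add, ← map_add, this]; rfl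
      linarith
    have : φ = (φ - φ₁ - φ₂) + φ₁ + φ₂ := by abel
    rw [this]
    exact Submodule.add_mem _ (Submodule.add_mem _ (Submodule.subset_span h0) h1)
      (Submodule.subset_span h2)

lemma intertwine {P : Type} [AddCommGroup P] [Module ℚ P] {Q : Type} [AddCommGroup Q] [Module ℚ Q]
    (σ : P →ₗ[ℚ] Q) (f : Module.End ℚ P) (h : Module.End ℚ Q)
    (hc : ∀ x, σ (f x) = h (σ x)) (q : ℚ[X]) (x : P) :
    σ ((aeval f q) x) = (aeval h q) (σ x) := by
  induction q using Polynomial.induction_on' generalizing x with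
  | add p q hp hq => simp [map_add, hp, hq]
  | monomial n c =>
    simp only [aeval_monomial, Algebra.algebraMap_eq_smul_one, Module.End.mul_apply,
      LinearMap.smul_apply, Module.End.one_apply, map_smul]
    congr 1
    induction n generalizing x with
    | zero => simp
    | succ n ih => simp [pow_succ, Module.End.mul_apply, hc, ih]

end Aux

/-- if `s` is a linear simulation from a deterministic linear transition
system `T` to a deterministic linear transition system `U` with rational spectrum,
then for every `g ∈ W*` the functional `g ∘ s` lies in the generalized rational
eigenspace `E_ℚ(T)`. -/
theorem dual_functional_mem_genRatEigenspace
    (V W : Type) [AddCommGroup V] [Module ℚ V] [FiniteDimensional ℚ V]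
    [AddCommGroup W] [Module ℚ W] [FiniteDimensional ℚ W]
    (R : Set (V × V)) (S : Set (W × W))
    (hRlin : IsLinearRel R) (hRdet : Deterministic R)
    (hSlin : IsLinearRel S) (hSdet : Deterministic S)
    (hSspec : HasRationalSpectrum S)
    (s : V →ₗ[ℚ] W) (hsim : Sim R S s)
    (p : Submodule ℚ V) (hp : (p : Set V) = OmegaDom R)
    (f : Module.End ℚ p) (hf : ∀ x : p, ((x : V), (f x : V)) ∈ R)
    (g : Module.Dual ℚ W) :
    g ∘ₗ s ∈ Submodule.span ℚ (GenRatEigenSet p f) := by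
  classical
  obtain ⟨q, h, hq, hh, hsplit⟩ := hSspec
  have hsq : ∀ x : p, s (x : V) ∈ q := by
    intro x
    have hx : (x : V) ∈ OmegaDom R := hp ▸ x.2
    obtain ⟨u, hu0, hu⟩ := hx
    rw [← SetLike.mem_coe, hq]
    exact ⟨fun k => s (u k), congrArg s hu0, fun k => hsim _ _ (hu k)⟩
  set σ : p →ₗ[ℚ] q := LinearMap.codRestrict q (s ∘ₗ p.subtype) (fun x => hsq x) with hσ
  have hcomm : ∀ x : p, σ (f x) = h (σ x) := by
    intro x
    have h1 : (s (x : V), s ((f x : p) : V)) ∈ S := hsim _ _ (hf x)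
    have h2 : ((σ x : W), ((h (σ x) : q) : W)) ∈ S := hh (σ x)
    exact Subtype.ext (hSdet (s (x : V)) _ _ h1 h2)
  obtain ⟨π, hπ⟩ := LinearMap.exists_leftInverse_of_injective p.subtype p.ker_subtype
  have hπ' : ∀ x : p, π (x : V) = x := fun x => congrFun (congrArg (fun l => l.toFun) hπ) x
  refine key_lemma p f π hπ' (LinearMap.charpoly h).roots (g ∘ₗ s) (fun x => ?_)
  have hcp : ((LinearMap.charpoly h).roots.map
      (fun l => Polynomial.X - Polynomial.C l)).prod = LinearMap.charpoly h :=
    (hsplit.eq_prod_roots_of_monic (LinearMap.charpoly_monic h)).symm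
  have : s ((Polynomial.aeval f ((LinearMap.charpoly h).roots.map
      (fun l => Polynomial.X - Polynomial.C l)).prod x : p) : V)
      = ((Polynomial.aeval h ((LinearMap.charpoly h).roots.map
      (fun l => Polynomial.X - Polynomial.C l)).prod (σ x) : q) : W) := by
    exact congrArg (Subtype.val) (intertwine σ f h hcomm _ x)
  rw [LinearMap.comp_apply, this, hcp, LinearMap.aeval_self_charpoly]
  simp
end

section
/- Let T = (V,R) be a deterministic linear transition system on a finite-dimensional ℚ-vector space V, and let (Q,q) = α_{E_ℚ(T)}(T). Then for every deterministic linear transition system U with rational spectrum on a finite-dimensional ℚ-vector space and every linear simulation s : T → U, there exists a unique linear simulation s̄ : Q → U such that s̄ ∘ q = s. -/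
open Module

section Helpers
open Polynomial

lemma coprime_of_no_root_of_splits (d c : ℚ[X]) (hc0 : c ≠ 0)
    (hsplit : c.Splits) (hd : ∀ l : ℚ, ¬ d.IsRoot l) :
    IsCoprime d c := by
  rw [hsplit.eq_prod_roots]
  apply IsCoprime.mul_right
  · exact ⟨0, Polynomial.C c.leadingCoeff⁻¹, by
      simp [← Polynomial.C_mul, inv_mul_cancel₀ (Polynomial.leadingCoeff_ne_zero.2 hc0)]⟩
  · generalize c.roots = ms
    induction ms using Multiset.induction_on with
    | empty => simp [isCoprime_one_right]
    | cons a t ih =>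
      rw [Multiset.map_cons, Multiset.prod_cons]
      refine IsCoprime.mul_right ?_ ih
      exact (((irreducible_X_sub_C a).coprime_iff_not_dvd).2
        (fun hdvd => hd a (Polynomial.dvd_iff_isRoot.1 hdvd))).symm

section Key

variable {V Y : Type} [AddCommGroup V] [Module ℚ V] [FiniteDimensional ℚ V]
  [AddCommGroup Y] [Module ℚ Y] [FiniteDimensional ℚ Y]

lemma key_vanish {R : Set (V × V)} {S : Set (Y × Y)}
    (p : Submodule ℚ V) (hp : (p : Set V) = OmegaDom R)
    (f : Module.End ℚ p) (hf : ∀ x : p, ((x : V), (f x : V)) ∈ R)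
    (hSdet : Deterministic S) (hS : HasRationalSpectrum S)
    (s : V →ₗ[ℚ] Y) (hs : Sim R S s)
    (x : V) (hx : ∀ h ∈ GenRatEigenSet p f, h x = 0) : s x = 0 := by
  obtain ⟨q', g, hq', hg, hsplit⟩ := hS
  -- x is in the omega-domain p
  have hxp : x ∈ p := by
    by_contra hxp
    obtain ⟨h, hhx, hhp⟩ := Submodule.exists_dual_map_eq_bot_of_notMem hxp inferInstance
    have hker : ∀ v ∈ p, h v = 0 := by
      intro v hv
      have : h v ∈ p.map h := Submodule.mem_map_of_mem hv
      rwa [hhp, Submodule.mem_bot] at this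
    exact hhx (hx h ⟨0, 1, le_refl 1, fun w => hker _ (Submodule.coe_mem _)⟩)
  set x' : p := ⟨x, hxp⟩ with hx'
  -- s maps p into q'
  have hmaps : ∀ y ∈ p, s y ∈ q' := by
    intro y hy
    have hy' : y ∈ OmegaDom R := by rw [← hp]; exact hy
    obtain ⟨u, hu0, hu⟩ := hy'
    show s y ∈ (q' : Set Y)
    rw [hq']
    exact ⟨fun k => s (u k), by simp [hu0], fun k => hs _ _ (hu k)⟩
  set s' : p →ₗ[ℚ] q' := s.restrict hmaps with hs'def
  have hs'coe : ∀ y : p, (s' y : Y) = s (y : V) := fun y => rfl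
  -- intertwining
  have hcomm : ∀ y : p, s' (f y) = g (s' y) := by
    intro y
    have h1 : (s (y : V), s ((f y : p) : V)) ∈ S := hs _ _ (hf y)
    have h2 : ((s' y : Y), (g (s' y) : Y)) ∈ S := hg (s' y)
    rw [hs'coe] at h2
    exact Subtype.ext (by rw [hs'coe]; exact hSdet _ _ _ h1 h2)
  have hpow : ∀ (n : ℕ) (y : p), s' ((f ^ n) y) = (g ^ n) (s' y) := by
    intro n
    induction n with
    | zero => intro y; simp
    | succ n ih =>
      intro y
      rw [pow_succ, pow_succ, Module.End.mul_apply, Module.End.mul_apply, ← hcomm, ← ih]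
  have haeval : ∀ (e : ℚ[X]) (y : p), s' ((aeval f e) y) = (aeval g e) (s' y) := by
    intro e y
    rw [aeval_eq_sum_range, aeval_eq_sum_range]
    simp [LinearMap.sum_apply, LinearMap.smul_apply, map_sum, map_smul, hpow]
  -- aeval of root-free polynomials at g is injective
  have hinj : ∀ d : ℚ[X], (∀ l : ℚ, ¬ d.IsRoot l) → ∀ w : q', (aeval g d) w = 0 → w = 0 := by
    intro d hd w hw
    obtain ⟨a, b, hab⟩ := coprime_of_no_root_of_splits d (LinearMap.charpoly g)
      (LinearMap.charpoly_monic g).ne_zero hsplit hd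
    have h1 : (aeval g (a * d + b * LinearMap.charpoly g)) w = w := by
      rw [hab]; simp
    rw [map_add, map_mul, map_mul, LinearMap.aeval_self_charpoly] at h1
    simpa [Module.End.mul_apply, hw] using h1.symm
  have hpsi : ∀ l : ℚ, aeval f (X - C l) = f - l • 1 := by
    intro l
    rw [map_sub, aeval_X, aeval_C, Algebra.algebraMap_eq_smul_one]
  have hnoroot : ∀ d : ℚ[X], (∀ l : ℚ, ¬ d.IsRoot l) → (aeval f d) x' = 0 → s' x' = 0 := by
    intro d hd h0
    apply hinj d hd
    rw [← haeval, h0, map_zero]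
  -- main induction on the degree
  have main : ∀ (n : ℕ) (d : ℚ[X]), d ≠ 0 → d.natDegree ≤ n → (aeval f d) x' = 0 →
      s' x' = 0 := by
    intro n
    induction n with
    | zero =>
      intro d hd0 hdeg h0
      refine hnoroot d (fun l hl => ?_) h0
      have hdC : d = C (d.coeff 0) := Polynomial.eq_C_of_natDegree_eq_zero (Nat.le_zero.1 hdeg)
      rw [hdC] at hl
      simp only [IsRoot, eval_C] at hl
      exact hd0 (by rw [hdC, hl, map_zero])
    | succ n ih =>
      intro d hd0 hdeg h0
      by_cases hroot : ∃ l : ℚ, d.IsRoot l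
      · obtain ⟨l, hl⟩ := hroot
        set m := rootMultiplicity l d with hm
        have hm1 : 1 ≤ m := (Polynomial.rootMultiplicity_pos hd0).2 hl
        set e := d /ₘ (X - C l) ^ m with he
        have hmonic : ((X - C l) ^ m).Monic := (monic_X_sub_C l).pow m
        have hdeq : (X - C l) ^ m * e = d := by
          have h2 := Polynomial.modByMonic_add_div d ((X - C l) ^ m)
          rwa [(Polynomial.modByMonic_eq_zero_iff_dvd hmonic).2
            (Polynomial.pow_rootMultiplicity_dvd d l), zero_add] at h2
        have he0 : e ≠ 0 := fun h => hd0 (by rw [← hdeq, h, mul_zero])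
        have heval : e.eval l ≠ 0 :=
          Polynomial.eval_divByMonic_pow_rootMultiplicity_ne_zero l hd0
        set k := Module.finrank ℚ p with hk
        set r := m + k with hr
        have hr1 : 1 ≤ r := le_trans hm1 (Nat.le_add_right _ _)
        have hrfin : Module.finrank ℚ p ≤ r := Nat.le_add_left _ _
        have hcop : IsCoprime ((X - C l) ^ r) e :=
          IsCoprime.pow_left (((irreducible_X_sub_C l).coprime_iff_not_dvd).2
            (fun hdvd => heval ((Polynomial.dvd_iff_isRoot).1 hdvd)))
        obtain ⟨a, b, hab⟩ := hcop
        set y := (aeval f (b * e)) x' with hy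
        set z := (aeval f (a * (X - C l) ^ r)) x' with hz
        have hxyz : z + y = x' := by
          have h3 : (aeval f (a * (X - C l) ^ r + b * e)) x' = (aeval f (1 : ℚ[X])) x' := by rw [hab]
          rw [map_add, LinearMap.add_apply, map_one, Module.End.one_apply] at h3
          exact h3
        set φ := aeval f (X - C l) with hφ
        set ψ := aeval f ((X - C l) ^ r) with hψ
        have hψφ : ψ = φ ^ r := by rw [hψ, hφ, map_pow]
        have hyker : ψ y = 0 := by
          have hpoly : (X - C l) ^ r * (b * e) = (b * (X - C l) ^ k) * d := by
            rw [← hdeq, hr, pow_add]; ring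
          have h4 : ψ y = (aeval f (b * (X - C l) ^ k)) ((aeval f d) x') := by
            rw [hψ, hy, ← Module.End.mul_apply, ← map_mul, hpoly, map_mul,
              Module.End.mul_apply]
          rw [h4, h0, map_zero]
        have hzran : z ∈ LinearMap.range ψ := by
          refine ⟨aeval f a x', ?_⟩
          rw [hψ, hz, ← Module.End.mul_apply, ← map_mul, mul_comm]
        have hy0 : y = 0 := by
          by_contra hy0
          have hkk : LinearMap.ker (φ ^ r) = LinearMap.ker (φ ^ (r + r)) := by
            rw [Module.End.ker_pow_eq_ker_pow_finrank_of_le hrfin,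
              Module.End.ker_pow_eq_ker_pow_finrank_of_le
                (le_trans hrfin (Nat.le_add_right r r))]
          have hynr : y ∉ LinearMap.range ψ := by
            intro hr'
            obtain ⟨u, hu⟩ := hr'
            have h5 : (φ ^ (r + r)) u = 0 := by
              rw [pow_add, Module.End.mul_apply, ← hψφ, hu]
              exact hyker
            have h6 : u ∈ LinearMap.ker (φ ^ r) := by
              rw [hkk]; exact LinearMap.mem_ker.2 h5
            rw [← hu, hψφ] at hy0
            exact hy0 (LinearMap.mem_ker.1 h6)
          obtain ⟨h₀, h₀y, h₀ran⟩ := Submodule.exists_dual_map_eq_bot_of_notMem hynr inferInstance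
          obtain ⟨h, hh⟩ := LinearMap.exists_extend h₀
          have hvanish : ∀ w ∈ LinearMap.range ψ, h₀ w = 0 := by
            intro w hw
            have : h₀ w ∈ (LinearMap.range ψ).map h₀ := Submodule.mem_map_of_mem hw
            rwa [h₀ran, Submodule.mem_bot] at this
          have hmem : h ∈ GenRatEigenSet p f := by
            refine ⟨l, r, hr1, fun w => ?_⟩
            have hcoe : h ((((f - l • 1) ^ r) w : p) : V) = h₀ (((f - l • 1) ^ r) w) := by
              rw [← hh]; rfl
            rw [hcoe]
            apply hvanish
            exact ⟨w, by rw [hψφ, hφ, hpsi]⟩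
          have hx0 : h x = 0 := hx h hmem
          have h7 : h₀ x' = 0 := by
            have : h₀ x' = h x := by rw [← hh]; rfl
            rw [this, hx0]
          have h8 : h₀ z = 0 := hvanish z hzran
          have : h₀ y = 0 := by
            have := congrArg h₀ hxyz
            rw [map_add, h8, zero_add] at this
            rw [this, h7]
          exact h₀y this
        have hxz : x' = z := by rw [← hxyz, hy0, add_zero]
        have hez : (aeval f e) x' = 0 := by
          have hpoly2 : e * (a * (X - C l) ^ r) = (a * (X - C l) ^ k) * d := by
            rw [← hdeq, hr, pow_add]; ring
          have h9 : (aeval f e) z = (aeval f (a * (X - C l) ^ k)) ((aeval f d) x') := by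
            rw [hz, ← Module.End.mul_apply, ← map_mul, hpoly2, map_mul, Module.End.mul_apply]
          rw [hxz, h9, h0, map_zero]
        have hdege : e.natDegree ≤ n := by
          have hnd : d.natDegree = m + e.natDegree := by
            rw [← hdeq, Polynomial.natDegree_mul (pow_ne_zero _ (X_sub_C_ne_zero l)) he0,
              Polynomial.natDegree_pow, Polynomial.natDegree_X_sub_C, mul_one]
          omega
        exact ih e he0 hdege hez
      · push_neg at hroot
        exact hnoroot d hroot h0
  have hfin : s' x' = 0 :=
    main (LinearMap.charpoly f).natDegree (LinearMap.charpoly f)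
      (LinearMap.charpoly_monic f).ne_zero le_rfl
      (by rw [LinearMap.aeval_self_charpoly]; rfl)
  have := congrArg (Subtype.val) hfin
  rwa [hs'coe] at this

end Key


end Helpers

lemma evalIn_surjective {V : Type} [AddCommGroup V] [Module ℚ V] [FiniteDimensional ℚ V]
    (Λ : Submodule ℚ (Module.Dual ℚ V)) : Function.Surjective (evalIn Λ) := by
  intro φ
  obtain ⟨ψ, hψ⟩ := LinearMap.exists_extend φ
  refine ⟨(Module.evalEquiv ℚ V).symm ψ, ?_⟩
  have h1 : Module.Dual.eval ℚ V ((Module.evalEquiv ℚ V).symm ψ) = ψ := by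
    rw [← Module.evalEquiv_toLinearMap]
    exact (Module.evalEquiv ℚ V).apply_symm_apply ψ
  show Λ.subtype.dualMap (Module.Dual.eval ℚ V ((Module.evalEquiv ℚ V).symm ψ)) = φ
  rw [h1, ← hψ]
  rfl

/-- every linear simulation from a deterministic linear transition
system `T` to a ℚ-DLTS factors uniquely through `α_{E_ℚ(T)}(T)`. -/
theorem genRatEigenspace_factor
    (V : Type) [AddCommGroup V] [Module ℚ V] [FiniteDimensional ℚ V]
    (R : Set (V × V)) (hRlin : IsLinearRel R) (hRdet : Deterministic R)
    (p : Submodule ℚ V) (hp : (p : Set V) = OmegaDom R)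
    (f : Module.End ℚ p) (hf : ∀ x : p, ((x : V), (f x : V)) ∈ R) :
    ∀ (X : QVec) (S : Set (X.carrier × X.carrier)),
      IsLinearRel S → Deterministic S → HasRationalSpectrum S →
      ∀ s : V →ₗ[ℚ] X.carrier, Sim R S s →
        ∃! sbar : Module.Dual ℚ (Submodule.span ℚ (GenRatEigenSet p f)) →ₗ[ℚ] X.carrier,
          sbar ∘ₗ evalIn (Submodule.span ℚ (GenRatEigenSet p f)) = s ∧
          Sim (ImageRel R (Submodule.span ℚ (GenRatEigenSet p f))) S sbar := by
  intro X S hSlin hSdet hSspec s hs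
  set Λ := Submodule.span ℚ (GenRatEigenSet p f) with hΛ
  have hkerle : ∀ v : V, evalIn Λ v = 0 → s v = 0 := by
    intro v hv
    apply key_vanish p hp f hf hSdet hSspec s hs
    intro h hh
    have h2 : evalIn Λ v ⟨h, Submodule.subset_span hh⟩ = 0 := by rw [hv]; rfl
    exact h2
  have hsurj : Function.Surjective (evalIn Λ) := evalIn_surjective Λ
  obtain ⟨σ, hσ⟩ :=
    (evalIn Λ).exists_rightInverse_of_surjective (LinearMap.range_eq_top.2 hsurj)
  set sbar := s ∘ₗ σ with hsbar
  have hcpt : ∀ v : V, sbar (evalIn Λ v) = s v := by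
    intro v
    have h1 : evalIn Λ (σ (evalIn Λ v) - v) = 0 := by
      rw [map_sub]
      have h3 : evalIn Λ (σ (evalIn Λ v)) = evalIn Λ v := by
        have h4 := LinearMap.ext_iff.1 hσ (evalIn Λ v)
        simpa using h4
      rw [h3, sub_self]
    have h2 := hkerle _ h1
    rw [map_sub, sub_eq_zero] at h2
    exact h2
  have hcomp : sbar ∘ₗ evalIn Λ = s := LinearMap.ext hcpt
  have hsim : Sim (ImageRel R Λ) S sbar := by
    intro φ φ' hmem
    obtain ⟨⟨v, v'⟩, hvR, hveq⟩ := hmem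
    have he1 : evalIn Λ v = φ := congrArg Prod.fst hveq
    have he2 : evalIn Λ v' = φ' := congrArg Prod.snd hveq
    rw [← he1, ← he2, hcpt, hcpt]
    exact hs _ _ hvR
  refine ⟨sbar, ⟨hcomp, hsim⟩, ?_⟩
  rintro t ⟨ht, -⟩
  apply LinearMap.ext
  intro φ
  obtain ⟨v, rfl⟩ := hsurj φ
  have h5 := LinearMap.ext_iff.1 ht v
  rw [LinearMap.comp_apply] at h5
  rw [h5, hcpt]
end

section
/- (Homogenization is functorial) Let A = (V,R_A) and B = (W,R_B) be nonempty affine transition systems on finite-dimensional ℚ-vector spaces, with chosen transitions (a₀,a₀′) ∈ R_A and (b₀,b₀′) ∈ R_B, and let s : V → W be a linear simulation from A to B. Then the map H(s) : V × ℚ → W × ℚ defined by H(s)(x,c) = (s(x), c) is a linear simulation from the homogenization H(A) (with respect to (a₀,a₀′)) to the homogenization H(B) (with respect to (b₀,b₀′)). -/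
open Module

/-- homogenization is functorial: if `s` is a linear simulation between
nonempty affine transition systems `A` and `B`, then `(x, c) ↦ (s x, c)` is a linear
simulation between their homogenizations. -/
theorem homog_functorial
    (V W : Type) [AddCommGroup V] [Module ℚ V] [FiniteDimensional ℚ V]
    [AddCommGroup W] [Module ℚ W] [FiniteDimensional ℚ W]
    (RA : Set (V × V)) (RB : Set (W × W))
    (AA : AffineSubspace ℚ (V × V)) (hAA : (AA : Set (V × V)) = RA)
    (AB : AffineSubspace ℚ (W × W)) (hAB : (AB : Set (W × W)) = RB)
    (a₀ a₀' : V) (ha : (a₀, a₀') ∈ RA)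
    (b₀ b₀' : W) (hb : (b₀, b₀') ∈ RB)
    (s : V →ₗ[ℚ] W) (hsim : Sim RA RB s) :
    Sim (Homog RA a₀ a₀') (Homog RB b₀ b₀')
      (s.prodMap (LinearMap.id : ℚ →ₗ[ℚ] ℚ)) := by
  intro p p' hp
  obtain ⟨hc, hm⟩ := hp
  refine ⟨hc, ?_⟩
  have hA : (s (p.1 + (1 - p.2) • a₀), s (p'.1 + (1 - p.2) • a₀')) ∈ RB := hsim _ _ hm
  have ha0 : (s a₀, s a₀') ∈ RB := hsim _ _ ha
  simp only [map_add, map_smul] at hA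
  rw [← hAB] at hb ha0 hA ⊢
  have key := AffineSubspace.smul_vsub_vadd_mem AB (1 - p.2) hb ha0 hA
  have heq : (1 - p.2) • ((b₀, b₀') -ᵥ (s a₀, s a₀')) +ᵥ
      (s p.1 + (1 - p.2) • s a₀, s p'.1 + (1 - p.2) • s a₀')
      = (s p.1 + (1 - p.2) • b₀, s p'.1 + (1 - p.2) • b₀') := by
    simp [Prod.ext_iff, smul_sub]
    constructor <;> abel
  rw [heq] at key
  simpa using key
end

section
/- (Correctness of dominant term analysis) Let m ≥ 1, let λ₁,…,λ_m be positive integers and d₁,…,d_m natural numbers such that the pairs (λ_i,d_i) are strictly decreasing in the lexicographic order (for i < j, either λ_i > λ_j, or λ_i = λ_j and d_i > d_j), let c₁,…,c_m ∈ ℚ, and define p(k) = Σ_{i=1}^m c_i · λ_i^k · k^{d_i}. Then p(k) ≥ 0 for all but finitely many k ∈ ℕ if and only if either all c_i are zero, or the coefficient c_{i₀} with least index i₀ among the nonzero coefficients satisfies c_{i₀} > 0. -/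
open Module

section DTAAux
open Filter Topology

lemma ratio_tendsto (a b : ℝ) (e D : ℕ) (ha : 0 < a) (hb : 0 < b)
    (h : a < b ∨ (a = b ∧ e < D)) :
    Tendsto (fun k : ℕ => (a ^ k * (k : ℝ) ^ e) / (b ^ k * (k : ℝ) ^ D)) atTop (𝓝 0) := by
  rcases h with hab | ⟨rfl, hed⟩
  · apply squeeze_zero' (g := fun k : ℕ => (k : ℝ) ^ e * (a / b) ^ k)
    · filter_upwards [eventually_ge_atTop 1] with k hk
      positivity
    · filter_upwards [eventually_ge_atTop 1] with k hk
      have hk1 : (1 : ℝ) ≤ (k : ℝ) := by exact_mod_cast hk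
      have hD : (1 : ℝ) ≤ (k : ℝ) ^ D := one_le_pow₀ hk1
      have hbk : (0 : ℝ) < b ^ k := by positivity
      rw [div_pow, div_le_iff₀ (by positivity)]
      calc a ^ k * (k:ℝ) ^ e = (k:ℝ)^e * a^k * 1 := by ring
        _ ≤ (k:ℝ)^e * a^k * (k:ℝ)^D := by
            apply mul_le_mul_of_nonneg_left hD (by positivity)
        _ = (k:ℝ)^e * (a^k / b^k) * (b^k * (k:ℝ)^D) := by
            field_simp
    · exact tendsto_pow_const_mul_const_pow_of_lt_one e (by positivity)
        ((div_lt_one hb).2 hab)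
  · have h1 : Tendsto (fun k : ℕ => ((k : ℝ)⁻¹) ^ (D - e)) atTop (𝓝 0) := by
      have := (tendsto_inv_atTop_zero.comp (tendsto_natCast_atTop_atTop (R := ℝ))).pow (D - e)
      rwa [zero_pow (by omega)] at this
    apply h1.congr'
    filter_upwards [eventually_ge_atTop 1] with k hk
    have hk0 : (0 : ℝ) < (k : ℝ) := by exact_mod_cast hk
    have hsplit : (k:ℝ) ^ D = (k:ℝ) ^ e * (k:ℝ) ^ (D - e) := by
      rw [← pow_add]; congr 1; omega
    rw [inv_pow, eq_div_iff (by positivity), hsplit]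
    field_simp

lemma dominant_tendsto (m : ℕ) (l : Fin m → ℤ) (hlpos : ∀ i, 0 < l i) (d : Fin m → ℕ)
    (c : Fin m → ℚ) (i₀ : Fin m)
    (hlex : ∀ j, i₀ < j → l j < l i₀ ∨ (l i₀ = l j ∧ d j < d i₀))
    (h0 : ∀ j, j < i₀ → c j = 0) :
    Tendsto (fun k : ℕ =>
        (∑ i, (c i : ℝ) * (l i : ℝ) ^ k * (k : ℝ) ^ (d i)) /
          ((l i₀ : ℝ) ^ k * (k : ℝ) ^ (d i₀)))
      atTop (𝓝 (c i₀)) := by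
  have hL : ∀ i, (0 : ℝ) < (l i : ℝ) := fun i => by exact_mod_cast hlpos i
  have key : Tendsto (fun k : ℕ => ∑ i, ((c i : ℝ) * (l i : ℝ) ^ k * (k : ℝ) ^ (d i)) /
      ((l i₀ : ℝ) ^ k * (k : ℝ) ^ (d i₀))) atTop
      (𝓝 (∑ i, if i = i₀ then (c i₀ : ℝ) else 0)) := by
    apply tendsto_finset_sum
    intro i _
    rcases lt_trichotomy i i₀ with hi | rfl | hi
    · simp only [if_neg hi.ne, h0 i hi]
      simpa using tendsto_const_nhds (x := (0:ℝ)) (f := atTop (α := ℕ))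
    · rw [if_pos rfl]
      apply tendsto_const_nhds.congr'
      filter_upwards [eventually_ge_atTop 1] with k hk
      have hk0 : (0 : ℝ) < (k : ℝ) := by exact_mod_cast hk
      have : (l i : ℝ) ^ k * (k : ℝ) ^ (d i) ≠ 0 :=
        (mul_pos (pow_pos (hL i) k) (pow_pos hk0 (d i))).ne'
      have hli : (l i : ℝ) ≠ 0 := (hL i).ne'
      field_simp
    · simp only [if_neg hi.ne']
      have harg : (l i : ℝ) < (l i₀ : ℝ) ∨ ((l i : ℝ) = (l i₀ : ℝ) ∧ d i < d i₀) := by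
        rcases hlex i hi with h | ⟨h1, h2⟩
        · exact Or.inl (by exact_mod_cast h)
        · exact Or.inr ⟨by exact_mod_cast h1.symm, h2⟩
      have := (ratio_tendsto (l i : ℝ) (l i₀ : ℝ) (d i) (d i₀) (hL i) (hL i₀)
        harg).const_mul (c i : ℝ)
      rw [mul_zero] at this
      apply this.congr
      intro k
      ring
  rw [Finset.sum_ite_eq' Finset.univ i₀ (fun _ => (c i₀ : ℝ))] at key
  simp only [Finset.mem_univ, if_pos] at key
  apply key.congr
  intro k
  rw [Finset.sum_div]

lemma dominant_sign (m : ℕ) (l : Fin m → ℤ) (hlpos : ∀ i, 0 < l i) (d : Fin m → ℕ)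
    (c : Fin m → ℚ) (i₀ : Fin m)
    (hlex : ∀ j, i₀ < j → l j < l i₀ ∨ (l i₀ = l j ∧ d j < d i₀))
    (h0 : ∀ j, j < i₀ → c j = 0) (hne : c i₀ ≠ 0) :
    ∃ K : ℕ, ∀ k : ℕ, K ≤ k →
      (0 < c i₀ → 0 < ∑ i, c i * (l i : ℚ) ^ k * (k : ℚ) ^ (d i)) ∧
      (c i₀ < 0 → ∑ i, c i * (l i : ℚ) ^ k * (k : ℚ) ^ (d i) < 0) := by
  have hT := dominant_tendsto m l hlpos d c i₀ hlex h0
  have hL : (0 : ℝ) < (l i₀ : ℝ) := by exact_mod_cast hlpos i₀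
  have hmem : {x : ℝ | 0 < x * (c i₀ : ℝ)} ∈ 𝓝 ((c i₀ : ℝ)) := by
    apply IsOpen.mem_nhds
    · exact isOpen_lt continuous_const (continuous_id.mul continuous_const)
    · simp only [Set.mem_setOf_eq, mul_self_pos]
      exact_mod_cast hne
  have := (hT.eventually hmem).and (eventually_ge_atTop 1)
  rw [eventually_atTop] at this
  obtain ⟨K, hK⟩ := this
  refine ⟨K, fun k hk => ?_⟩
  obtain ⟨hpos, hk1⟩ := hK k hk
  have hk0 : (0 : ℝ) < (k : ℝ) := by exact_mod_cast hk1
  have hden : (0 : ℝ) < (l i₀ : ℝ) ^ k * (k : ℝ) ^ (d i₀) := by positivity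
  set S : ℝ := ∑ i, (c i : ℝ) * (l i : ℝ) ^ k * (k : ℝ) ^ (d i) with hS
  have hcast : ((∑ i, c i * (l i : ℚ) ^ k * (k : ℚ) ^ (d i) : ℚ) : ℝ) = S := by
    push_cast [hS]; ring_nf; exact Finset.sum_congr rfl (fun x _ => by ring)
  constructor
  · intro hc
    have hc' : (0 : ℝ) < (c i₀ : ℝ) := by exact_mod_cast hc
    have : 0 < S / ((l i₀ : ℝ) ^ k * (k : ℝ) ^ (d i₀)) := by
      by_contra hcon
      push_neg at hcon
      nlinarith
    have hSpos : 0 < S := by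
      have := (div_pos_iff).1 this
      rcases this with ⟨h1, _⟩ | ⟨_, h2⟩
      · exact h1
      · linarith
    exact_mod_cast hcast ▸ hSpos
  · intro hc
    have hc' : ((c i₀ : ℝ)) < 0 := by exact_mod_cast hc
    have : S / ((l i₀ : ℝ) ^ k * (k : ℝ) ^ (d i₀)) < 0 := by
      by_contra hcon
      push_neg at hcon
      nlinarith
    have hSneg : S < 0 := by
      rcases (div_neg_iff).1 this with ⟨h1, h2⟩ | ⟨h1, h2⟩
      · linarith
      · exact h1
    exact_mod_cast hcast ▸ hSneg

end DTAAux

/-- Correctness of dominant term analysis: an exponential-polynomial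
sequence is eventually nonnegative iff all coefficients vanish or the first nonzero
coefficient is positive. -/
theorem dta_correct
    (m : ℕ) (hm : 1 ≤ m)
    (l : Fin m → ℤ) (hlpos : ∀ i, 0 < l i)
    (d : Fin m → ℕ)
    (hlex : ∀ i j : Fin m, i < j → l j < l i ∨ (l i = l j ∧ d j < d i))
    (c : Fin m → ℚ) :
    (∃ K : ℕ, ∀ k : ℕ, K ≤ k → 0 ≤ ∑ i : Fin m, c i * (l i : ℚ) ^ k * (k : ℚ) ^ (d i)) ↔
    ((∀ i, c i = 0) ∨ ∃ i₀ : Fin m, 0 < c i₀ ∧ ∀ j : Fin m, j < i₀ → c j = 0) := by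
  constructor
  · rintro ⟨K, hK⟩
    by_cases hall : ∀ i, c i = 0
    · exact Or.inl hall
    · right
      push_neg at hall
      set s := Finset.univ.filter (fun i => c i ≠ 0) with hsdef
      have hs : s.Nonempty := by obtain ⟨i, hi⟩ := hall; exact ⟨i, by simp [hsdef, hi]⟩
      set i₀ := s.min' hs with hi₀def
      have hi₀ : c i₀ ≠ 0 := by have := s.min'_mem hs; simpa [hsdef] using this
      have h0 : ∀ j, j < i₀ → c j = 0 := by
        intro j hj
        by_contra hc
        exact absurd (s.min'_le j (by simp [hsdef, hc])) (not_le.2 hj)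
      refine ⟨i₀, ?_, h0⟩
      rcases hi₀.lt_or_gt with hneg | hpos
      · exfalso
        obtain ⟨K', hK'⟩ := dominant_sign m l hlpos d c i₀ (fun j hj => hlex i₀ j hj) h0 hi₀
        have h1 := (hK' (max K K') (le_max_right _ _)).2 hneg
        have h2 := hK (max K K') (le_max_left _ _)
        linarith
      · exact hpos
  · rintro (hall | ⟨i₀, hpos, h0⟩)
    · exact ⟨0, fun k _ => by simp [hall]⟩
    · obtain ⟨K, hK⟩ := dominant_sign m l hlpos d c i₀ (fun j hj => hlex i₀ j hj) h0 hpos.ne'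
      exact ⟨K, fun k hk => le_of_lt ((hK k hk).1 hpos)⟩
end

section
/- Let A be an n × n matrix over ℚ with integer spectrum, i.e., the characteristic polynomial of A splits over ℚ and every root of it is an integer. Then there exist a positive integer Q, a natural number m, integers λ₁,…,λ_m, natural numbers d₁,…,d_m, n × n integer matrices C₁,…,C_m, and K ∈ ℕ such that for all k ≥ K, Q · A^k = Σ_{j=1}^m λ_j^k · k^{d_j} · C_j. Consequently, for every row vector c ∈ ℤ^n, the function k ↦ cᵀ A^k x has, for all sufficiently large k, the closed form (1/Q) Σ_j λ_j^k k^{d_j} (a_jᵀ x) with integer row vectors a_jᵀ = cᵀ C_j. -/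
open Module

namespace IntSpecAux

open Matrix Polynomial Finset

variable {n : ℕ}

/-- Closed-form property for matrix-valued sequences (rational-matrix version). -/
def CF (n : ℕ) (F : ℕ → Matrix (Fin n) (Fin n) ℚ) : Prop :=
  ∃ (m : ℕ) (l : Fin m → ℤ) (d : Fin m → ℕ) (C : Fin m → Matrix (Fin n) (Fin n) ℚ) (K : ℕ),
    ∀ k : ℕ, K ≤ k → F k = ∑ j : Fin m, ((l j : ℚ) ^ k * (k : ℚ) ^ (d j)) • C j

lemma cf_congr {F G : ℕ → Matrix (Fin n) (Fin n) ℚ} (K₀ : ℕ)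
    (h : ∀ k, K₀ ≤ k → F k = G k) (hG : CF n G) : CF n F := by
  obtain ⟨m, l, d, C, K, hK⟩ := hG
  exact ⟨m, l, d, C, max K K₀, fun k hk => (h k (le_trans (le_max_right _ _) hk)).trans
    (hK k (le_trans (le_max_left _ _) hk))⟩

lemma cf_zero {F : ℕ → Matrix (Fin n) (Fin n) ℚ} (K₀ : ℕ)
    (h : ∀ k, K₀ ≤ k → F k = 0) : CF n F :=
  ⟨0, ![], ![], ![], K₀, fun k hk => by simp [h k hk]⟩

lemma cf_add {F G : ℕ → Matrix (Fin n) (Fin n) ℚ} (hF : CF n F) (hG : CF n G) :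
    CF n (fun k => F k + G k) := by
  obtain ⟨m₁, l₁, d₁, C₁, K₁, h₁⟩ := hF
  obtain ⟨m₂, l₂, d₂, C₂, K₂, h₂⟩ := hG
  refine ⟨m₁ + m₂, Fin.append l₁ l₂, Fin.append d₁ d₂, Fin.append C₁ C₂, max K₁ K₂,
    fun k hk => ?_⟩
  show F k + G k = _
  rw [h₁ k (le_trans (le_max_left _ _) hk), h₂ k (le_trans (le_max_right _ _) hk),
    Fin.sum_univ_add]
  simp [Fin.append_left, Fin.append_right]

lemma cf_sum {ι : Type} [DecidableEq ι] (s : Finset ι) (F : ι → ℕ → Matrix (Fin n) (Fin n) ℚ)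
    (h : ∀ i ∈ s, CF n (F i)) : CF n (fun k => ∑ i ∈ s, F i k) := by
  induction s using Finset.induction_on with
  | empty => exact cf_zero 0 fun k _ => by simp
  | @insert a s ha ih =>
    exact cf_congr 0 (fun k _ => by rw [Finset.sum_insert ha])
      (cf_add (h a (mem_insert_self a s)) (ih fun i hi => h i (mem_insert_of_mem hi)))

lemma cf_mono (l₀ : ℤ) (d₀ : ℕ) (C₀ : Matrix (Fin n) (Fin n) ℚ) :
    CF n (fun k => ((l₀ : ℚ) ^ k * (k : ℚ) ^ d₀) • C₀) :=
  ⟨1, ![l₀], ![d₀], ![C₀], 0, fun k _ => by simp⟩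


lemma binom_key (B P : Matrix (Fin n) (Fin n) ℚ) (μ : ℚ) (m₀ : ℕ)
    (h : (B - μ • 1) ^ m₀ * P = 0) (k : ℕ) (hk : m₀ ≤ k) :
    B ^ k * P = ∑ r ∈ Finset.range m₀,
      ((k.choose r : ℚ) * μ ^ (k - r)) • ((B - μ • 1) ^ r * P) := by
  have hcomm : Commute (B - μ • 1) (μ • (1 : Matrix (Fin n) (Fin n) ℚ)) :=
    (Commute.one_right _).smul_right μ
  have hB : B = (B - μ • 1) + μ • 1 := by abel
  have expand : B ^ k * P = ∑ r ∈ Finset.range (k + 1),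
      ((k.choose r : ℚ) * μ ^ (k - r)) • ((B - μ • 1) ^ r * P) := by
    conv_lhs => rw [hB, hcomm.add_pow]
    rw [Finset.sum_mul]
    refine Finset.sum_congr rfl fun r _ => ?_
    have hc : ((k.choose r : ℕ) : Matrix (Fin n) (Fin n) ℚ)
        = ((k.choose r : ℚ)) • 1 := by
      rw [← map_natCast (algebraMap ℚ (Matrix (Fin n) (Fin n) ℚ)),
        Algebra.algebraMap_eq_smul_one]
    rw [hc, _root_.smul_pow, one_pow]
    simp only [mul_smul_comm, smul_mul_assoc, mul_one, smul_smul]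
  rw [expand]
  refine (Finset.sum_subset (Finset.range_subset_range.mpr (by omega)) fun r hr hr' => ?_).symm
  have hrm : m₀ ≤ r := by
    simp only [Finset.mem_range] at hr hr'; omega
  have hxr : (B - μ • 1) ^ r * P = 0 := by
    have : (B - μ • 1) ^ r = (B - μ • 1) ^ (r - m₀) * (B - μ • 1) ^ m₀ := by
      rw [← pow_add]; congr 1; omega
    rw [this, mul_assoc, h, mul_zero]
  rw [hxr, smul_zero]

lemma cf_eigen (B P : Matrix (Fin n) (Fin n) ℚ) (μ : ℤ) (m₀ : ℕ)
    (h : (B - (μ : ℚ) • 1) ^ m₀ * P = 0) : CF n (fun k => B ^ k * P) := by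
  by_cases hμ : (μ : ℚ) = 0
  · refine cf_zero m₀ fun k hk => ?_
    rw [hμ] at h
    simp only [zero_smul, sub_zero] at h
    have : B ^ k = B ^ (k - m₀) * B ^ m₀ := by rw [← pow_add]; congr 1; omega
    rw [this, mul_assoc, h, mul_zero]
  · refine cf_congr m₀ (fun k hk => ?_)
      (cf_sum (Finset.range m₀) (fun r k => ∑ d ∈ Finset.range (r + 1),
        (((μ : ℚ)) ^ k * (k : ℚ) ^ d) •
          ((((descPochhammer ℚ r).coeff d / (r.factorial : ℚ)) * ((μ : ℚ))⁻¹ ^ r) •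
            ((B - (μ : ℚ) • 1) ^ r * P)))
        (fun r _ => cf_sum _ _ fun d _ => cf_mono μ d _))
    rw [binom_key B P (μ : ℚ) m₀ h k hk]
    refine Finset.sum_congr rfl fun r hr => ?_
    have hrk : r ≤ k := le_trans (le_of_lt (Finset.mem_range.mp hr)) hk
    have hsc : (k.choose r : ℚ) * (μ : ℚ) ^ (k - r)
        = ∑ d ∈ Finset.range (r + 1),
          (((μ : ℚ)) ^ k * (k : ℚ) ^ d) *
            (((descPochhammer ℚ r).coeff d / (r.factorial : ℚ)) * ((μ : ℚ))⁻¹ ^ r) := by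
      have h1 : (k.choose r : ℚ) = (descPochhammer ℚ r).eval (k : ℚ) / (r.factorial : ℚ) := by
        rw [descPochhammer_eval_eq_descFactorial, Nat.descFactorial_eq_factorial_mul_choose]
        push_cast
        rw [mul_comm, mul_div_assoc, div_self (by exact_mod_cast r.factorial_ne_zero), mul_one]
      have h2 : (μ : ℚ) ^ (k - r) = (μ : ℚ) ^ k * ((μ : ℚ))⁻¹ ^ r := by
        have : (μ : ℚ) ^ (k - r) * (μ : ℚ) ^ r = (μ : ℚ) ^ k := by
          rw [← pow_add]; congr 1; omega
        field_simp [inv_pow]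
        have hinv : (μ : ℚ) ^ r * ((μ : ℚ))⁻¹ ^ r = 1 := by
          rw [← mul_pow, mul_inv_cancel₀ hμ, one_pow]
        linear_combination (-(μ : ℚ) ^ (k - r)) * hinv + (((μ : ℚ))⁻¹ ^ r) * this
      have h3 : (descPochhammer ℚ r).eval (k : ℚ)
          = ∑ d ∈ Finset.range (r + 1), (descPochhammer ℚ r).coeff d * (k : ℚ) ^ d := by
        rw [Polynomial.eval_eq_sum_range' ((descPochhammer_natDegree ℚ r).le.trans_lt (lt_add_one r))]
      rw [h1, h2, h3, Finset.sum_div, Finset.sum_mul]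
      refine Finset.sum_congr rfl fun d _ => ?_
      field_simp
    rw [hsc, Finset.sum_smul]
    exact Finset.sum_congr rfl fun d _ => by rw [smul_smul]


lemma cf_const_case (q : Polynomial ℚ) (hq : q ≠ 0) (h0 : q.natDegree = 0)
    (B M : Matrix (Fin n) (Fin n) ℚ) (hM : Polynomial.aeval B q * M = 0) :
    CF n (fun k => B ^ k * M) := by
  have hc : q = Polynomial.C (q.coeff 0) := Polynomial.eq_C_of_natDegree_eq_zero h0
  have hc0 : q.coeff 0 ≠ 0 := fun hcc => hq (by rw [hc, hcc, map_zero])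
  rw [hc, Polynomial.aeval_C, Algebra.algebraMap_eq_smul_one, smul_mul_assoc, one_mul,
    smul_eq_zero] at hM
  have : M = 0 := hM.resolve_left hc0
  exact cf_zero 0 fun k _ => by rw [this, mul_zero]

lemma cf_main : ∀ (N : ℕ) (q : Polynomial ℚ), q ≠ 0 → q.natDegree ≤ N →
    q.Splits → (∀ x ∈ q.roots, ∃ z : ℤ, (z : ℚ) = x) →
    ∀ B M : Matrix (Fin n) (Fin n) ℚ, Polynomial.aeval B q * M = 0 →
    CF n (fun k => B ^ k * M) := by
  intro N
  induction N with
  | zero => exact fun q hq hdeg _ _ B M hM => cf_const_case q hq (Nat.le_zero.mp hdeg) B M hM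
  | succ N ih =>
    intro q hq hdeg hs hr B M hM
    by_cases h0 : q.natDegree = 0
    · exact cf_const_case q hq h0 B M hM
    · have hdeg0 : q.degree ≠ 0 := fun hd =>
        h0 (Polynomial.natDegree_eq_zero_iff_degree_le_zero.mpr (le_of_eq hd))
      obtain ⟨μ, hμroot⟩ := Polynomial.Splits.exists_eval_eq_zero hs hdeg0
      have hμroot' : q.IsRoot μ := by
        simpa [Polynomial.IsRoot] using hμroot
      set m₀ := q.rootMultiplicity μ with hm₀def
      obtain ⟨q', hfac, hndvd⟩ := q.exists_eq_pow_rootMultiplicity_mul_and_not_dvd hq μ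
      have hm₀ : 0 < m₀ := (Polynomial.rootMultiplicity_pos hq).mpr hμroot'
      have hq'0 : q' ≠ 0 := fun hz => hq (by rw [hfac, hz, mul_zero])
      have hco : IsCoprime ((Polynomial.X - Polynomial.C μ) ^ m₀) q' :=
        (((Polynomial.irreducible_X_sub_C μ).coprime_iff_not_dvd.mpr hndvd).pow_left)
      obtain ⟨a, b, hab⟩ := hco
      have haev : Polynomial.aeval B (Polynomial.X - Polynomial.C μ) = B - μ • 1 := by
        rw [map_sub, Polynomial.aeval_X, Polynomial.aeval_C, Algebra.algebraMap_eq_smul_one]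
      set P : Matrix (Fin n) (Fin n) ℚ := Polynomial.aeval B (b * q') * M with hPdef
      set P' : Matrix (Fin n) (Fin n) ℚ :=
        Polynomial.aeval B (a * (Polynomial.X - Polynomial.C μ) ^ m₀) * M with hP'def
      have hPP' : M = P + P' := by
        rw [hPdef, hP'def, ← add_mul, ← map_add]
        rw [show b * q' + a * (Polynomial.X - Polynomial.C μ) ^ m₀ = 1 by
          rw [add_comm]; exact hab]
        rw [_root_.map_one, one_mul]
      have hP : (B - μ • 1) ^ m₀ * P = 0 := by
        rw [hPdef, ← mul_assoc, ← haev, ← map_pow, ← _root_.map_mul]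
        rw [show (Polynomial.X - Polynomial.C μ) ^ m₀ * (b * q') = b * q by
          rw [hfac]; ring]
        rw [_root_.map_mul, mul_assoc, hM, mul_zero]
      have hP' : Polynomial.aeval B q' * P' = 0 := by
        rw [hP'def, ← mul_assoc, ← _root_.map_mul]
        rw [show q' * (a * (Polynomial.X - Polynomial.C μ) ^ m₀) = a * q by
          rw [hfac]; ring]
        rw [_root_.map_mul, mul_assoc, hM, mul_zero]
      have hdvd : q' ∣ q := ⟨(Polynomial.X - Polynomial.C μ) ^ m₀, by rw [hfac]; ring⟩
      have hdeg' : q'.natDegree ≤ N := by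
        have hXC : ((Polynomial.X - Polynomial.C μ) ^ m₀).natDegree = m₀ := by
          rw [Polynomial.natDegree_pow, Polynomial.natDegree_X_sub_C, mul_one]
        have := hfac ▸ hdeg
        rw [Polynomial.natDegree_mul (pow_ne_zero _ (Polynomial.X_sub_C_ne_zero μ)) hq'0, hXC]
          at this
        omega
      obtain ⟨z, hz⟩ := hr μ ((Polynomial.mem_roots hq).mpr hμroot')
      have c1 : CF n (fun k => B ^ k * P) := cf_eigen B P z m₀ (by rw [hz]; exact hP)
      have c2 : CF n (fun k => B ^ k * P') :=
        ih q' hq'0 hdeg' (Polynomial.Splits.of_dvd hs hq hdvd)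
          (fun x hx => hr x (Multiset.mem_of_le (Polynomial.roots.le_of_dvd hq hdvd) hx)) B P' hP'
      refine cf_congr 0 (fun k _ => ?_) (cf_add c1 c2)
      show B ^ k * M = B ^ k * P + B ^ k * P'
      rw [hPP', mul_add]
      

lemma sum_mulVec {ι : Type} (s : Finset ι) (M : ι → Matrix (Fin n) (Fin n) ℚ)
    (x : Fin n → ℚ) : (∑ i ∈ s, M i).mulVec x = ∑ i ∈ s, (M i).mulVec x := by
  classical
  induction s using Finset.induction_on with
  | empty => simp [Matrix.zero_mulVec]
  | @insert a s ha ih => simp [Finset.sum_insert ha, Matrix.add_mulVec, ih]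

lemma dot_sum {ι : Type} (s : Finset ι) (v : Fin n → ℚ) (w : ι → Fin n → ℚ) :
    v ⬝ᵥ (∑ i ∈ s, w i) = ∑ i ∈ s, v ⬝ᵥ w i := by
  classical
  induction s using Finset.induction_on with
  | empty => simp
  | @insert a s ha ih => simp [Finset.sum_insert ha, dotProduct_add, ih]

end IntSpecAux


open Matrix in
/-- a rational matrix with integer spectrum has, for all sufficiently
large `k`, a closed form `Q • A^k = Σ_j λ_j^k k^{d_j} • C_j` with integer bases,
exponents, and matrices; consequently `cᵀ A^k x` has an exponential-polynomial
closed form `(1/Q) Σ_j λ_j^k k^{d_j} (a_jᵀ x)` with `a_jᵀ = cᵀ C_j`. -/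
theorem integer_spectrum_closed_form
    (n : ℕ) (A : Matrix (Fin n) (Fin n) ℚ)
    (hsplit : A.charpoly.Splits)
    (hint : ∀ x ∈ A.charpoly.roots, ∃ z : ℤ, (z : ℚ) = x) :
    ∃ (Q : ℕ) (_ : 0 < Q) (m : ℕ) (l : Fin m → ℤ) (d : Fin m → ℕ)
      (C : Fin m → Matrix (Fin n) (Fin n) ℤ) (K : ℕ),
      (∀ k : ℕ, K ≤ k →
        (Q : ℚ) • A ^ k =
          ∑ j : Fin m, ((l j : ℚ) ^ k * (k : ℚ) ^ (d j)) • (C j).map (fun z => (z : ℚ))) ∧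
      (∀ (cvec : Fin n → ℤ) (x : Fin n → ℚ) (k : ℕ), K ≤ k →
        (Q : ℚ) * ((fun i => ((cvec i : ℚ))) ⬝ᵥ (A ^ k).mulVec x) =
          ∑ j : Fin m, (l j : ℚ) ^ k * (k : ℚ) ^ (d j) *
            ((fun i => ((cvec ᵥ* C j) i : ℚ)) ⬝ᵥ x)) := by
  classical
  have h0 : Polynomial.aeval A A.charpoly * 1 = 0 := by
    rw [Matrix.aeval_self_charpoly, zero_mul]
  have hcf : IntSpecAux.CF n (fun k => A ^ k * 1) :=
    IntSpecAux.cf_main A.charpoly.natDegree A.charpoly (A.charpoly_monic.ne_zero) le_rfl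
      hsplit hint A 1 h0
  obtain ⟨m, l, d, C, K, hK⟩ := hcf
  set Q : ℕ := ∏ j : Fin m, ∏ a : Fin n, ∏ b : Fin n, (C j a b).den with hQdef
  have hQpos : 0 < Q := Finset.prod_pos fun j _ => Finset.prod_pos fun a _ =>
    Finset.prod_pos fun b _ => (C j a b).den_pos
  have hden : ∀ j a b, ((C j a b).den) ∣ Q := by
    intro j a b
    refine dvd_trans (dvd_trans ?_ (Finset.dvd_prod_of_mem _ (Finset.mem_univ a)))
      (Finset.dvd_prod_of_mem _ (Finset.mem_univ j))
    exact Finset.dvd_prod_of_mem _ (Finset.mem_univ b)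
  have hQC : ∀ j a b, ((((Q : ℚ) * C j a b).num : ℤ) : ℚ) = (Q : ℚ) * C j a b := by
    intro j a b
    obtain ⟨t, ht⟩ := hden j a b
    have heq : (Q : ℚ) * C j a b = ((t * (C j a b).num : ℤ) : ℚ) := by
      rw [ht]
      push_cast
      rw [mul_comm ((C j a b).den : ℚ) (t : ℚ), mul_assoc,
        mul_comm ((C j a b).den : ℚ) (C j a b), Rat.mul_den_eq_num]
    rw [heq, Rat.num_intCast]
  set D : Fin m → Matrix (Fin n) (Fin n) ℤ :=
    fun j => Matrix.of (fun a b => ((Q : ℚ) * C j a b).num) with hDdef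
  have hmap : ∀ j, (D j).map (fun z : ℤ => (z : ℚ)) = (Q : ℚ) • C j := by
    intro j
    ext a b
    simp only [hDdef, Matrix.map_apply, Matrix.of_apply, Matrix.smul_apply, smul_eq_mul]
    exact hQC j a b
  have hQAk : ∀ k : ℕ, K ≤ k → (Q : ℚ) • A ^ k =
      ∑ j : Fin m, ((l j : ℚ) ^ k * (k : ℚ) ^ (d j)) • (D j).map (fun z : ℤ => (z : ℚ)) := by
    intro k hk
    have hk' : A ^ k = ∑ j : Fin m, ((l j : ℚ) ^ k * (k : ℚ) ^ (d j)) • C j := by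
      have := hK k hk
      simpa using this
    rw [hk', Finset.smul_sum]
    refine Finset.sum_congr rfl fun j _ => ?_
    rw [hmap, smul_comm]
  refine ⟨Q, hQpos, m, l, d, D, K, hQAk, ?_⟩
  intro cvec x k hk
  have hvm : ∀ j, (fun i => ((cvec ᵥ* D j) i : ℚ))
      = (fun i => ((cvec i : ℚ))) ᵥ* ((D j).map (fun z : ℤ => (z : ℚ))) := by
    intro j
    funext i
    simp only [Matrix.vecMul, dotProduct, Matrix.map_apply]
    push_cast
    rfl
  calc (Q : ℚ) * ((fun i => ((cvec i : ℚ))) ⬝ᵥ (A ^ k).mulVec x)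
      = (fun i => ((cvec i : ℚ))) ⬝ᵥ (((Q : ℚ) • A ^ k).mulVec x) := by
        rw [Matrix.smul_mulVec, dotProduct_smul, smul_eq_mul]
    _ = (fun i => ((cvec i : ℚ))) ⬝ᵥ ((∑ j : Fin m,
          ((l j : ℚ) ^ k * (k : ℚ) ^ (d j)) • (D j).map (fun z : ℤ => (z : ℚ))).mulVec x) := by
        rw [hQAk k hk]
    _ = ∑ j : Fin m, (l j : ℚ) ^ k * (k : ℚ) ^ (d j) *
          ((fun i => ((cvec ᵥ* D j) i : ℚ)) ⬝ᵥ x) := by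
        rw [IntSpecAux.sum_mulVec, IntSpecAux.dot_sum]
        refine Finset.sum_congr rfl fun j _ => ?_
        rw [Matrix.smul_mulVec, dotProduct_smul, smul_eq_mul,
          Matrix.dotProduct_mulVec, hvm j]
end
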